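/- arXiv:2302.14034 — 5 statements merged into one kernel-verified Lean document; each statement's English description precedes it below -/
import Mathlib

section
/- Let r1 ∈ (1/2, 1) and r2 > 0 satisfy 2 r1 + r2 > 2, and let C > 0. If f : ℝ² → ℂ is a measurable function satisfying ‖f(s,u)‖ ≤ C · |s·u|^{−r1} · ( 1_{[s−1, s)}(u) + |s − u|^{−r2} · 1_{(−∞, s−1)}(u) ) for all (s,u) ∈ ℝ², then ∫_{ℝ²} ‖f(s,u)‖ du ds < ∞. -/
open MeasureTheory Set Real intervalIntegral


lemma lint_Ioo_rpow (r a : ℝ) (hr : r < 1) (ha : 0 < a) :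
    ∫⁻ x in Ioo (0:ℝ) a, ENNReal.ofReal (x ^ (-r)) = ENNReal.ofReal (a ^ (1-r) / (1-r)) := by
  have hint : IntegrableOn (fun x : ℝ => x ^ (-r)) (Ioo 0 a) :=
    (integrableOn_Ioo_rpow_iff ha).2 (by linarith)
  rw [← ofReal_integral_eq_lintegral_ofReal hint ?_]
  · congr 1
    rw [← MeasureTheory.integral_Ioc_eq_integral_Ioo,
      ← integral_of_le ha.le,
      integral_rpow (Or.inl (by linarith : (-1:ℝ) < -r))]
    rw [Real.zero_rpow (by linarith : -r + 1 ≠ 0)]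
    rw [show -r + 1 = 1 - r by ring]
    ring
  · filter_upwards [ae_restrict_mem measurableSet_Ioo] with x hx
    exact rpow_nonneg hx.1.le _

lemma lint_Ioi_rpow (p a : ℝ) (hp : 1 < p) (ha : 0 < a) :
    ∫⁻ x in Ioi a, ENNReal.ofReal (x ^ (-p)) = ENNReal.ofReal (a ^ (1-p) / (p-1)) := by
  have hint : IntegrableOn (fun x : ℝ => x ^ (-p)) (Ioi a) :=
    integrableOn_Ioi_rpow_of_lt (by linarith) ha
  rw [← ofReal_integral_eq_lintegral_ofReal hint ?_]
  · congr 1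
    rw [integral_Ioi_rpow_of_lt (by linarith) ha]
    rw [show -p + 1 = -(p - 1) by ring, show a ^ (-(p-1)) = a ^ (1-p) by ring_nf]
    rw [div_neg, neg_div, neg_neg]
  · filter_upwards [ae_restrict_mem measurableSet_Ioi] with x hx
    exact rpow_nonneg (ha.trans hx).le _

lemma lint_reflect (e : ℝ) (s : Set ℝ) (hs : MeasurableSet s) :
    ∫⁻ x in Neg.neg ⁻¹' s, ENNReal.ofReal (|x| ^ e) = ∫⁻ x in s, ENNReal.ofReal (|x| ^ e) := by
  have hm : Measurable fun x : ℝ => s.indicator (fun y => ENNReal.ofReal (|y| ^ e)) x :=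
    (measurable_id.abs.pow_const e).ennreal_ofReal.indicator hs
  rw [← lintegral_indicator hs _, ← lintegral_indicator (hs.preimage measurable_neg) _,
    ← (Measure.measurePreserving_neg (volume : Measure ℝ)).lintegral_comp hm]
  congr 1
  funext x
  by_cases hx : -x ∈ s
  · rw [indicator_of_mem hx, indicator_of_mem (by exact hx), abs_neg]
  · rw [indicator_of_notMem hx, indicator_of_notMem (by exact hx)]


lemma lint_abs_Ioo (r a : ℝ) (hr : r < 1) (ha : 0 < a) :
    ∫⁻ x in Ioo (-a) a, ENNReal.ofReal (|x| ^ (-r)) ≤ ENNReal.ofReal (2 * (a ^ (1-r) / (1-r))) := by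
  have hpos : ∫⁻ x in Ioo (0:ℝ) a, ENNReal.ofReal (|x| ^ (-r)) = ENNReal.ofReal (a ^ (1-r) / (1-r)) := by
    rw [setLIntegral_congr_fun measurableSet_Ioo
      (f := fun x => ENNReal.ofReal (|x| ^ (-r))) (g := fun x => ENNReal.ofReal (x ^ (-r)))
      (fun x (hx : x ∈ Ioo (0:ℝ) a) => by simp only [abs_of_pos hx.1])]
    exact lint_Ioo_rpow r a hr ha
  have hsub : Ioo (-a) a ⊆ Ioo (-a) 0 ∪ Icc 0 a := by
    intro x hx
    rcases le_or_gt 0 x with h | h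
    · exact Or.inr ⟨h, hx.2.le⟩
    · exact Or.inl ⟨hx.1, h⟩
  calc ∫⁻ x in Ioo (-a) a, ENNReal.ofReal (|x| ^ (-r))
      ≤ ∫⁻ x in Ioo (-a) 0 ∪ Icc 0 a, ENNReal.ofReal (|x| ^ (-r)) :=
        lintegral_mono_set hsub
    _ ≤ (∫⁻ x in Ioo (-a) 0, ENNReal.ofReal (|x| ^ (-r)))
        + ∫⁻ x in Icc 0 a, ENNReal.ofReal (|x| ^ (-r)) := lintegral_union_le _ _ _
    _ = (∫⁻ x in Ioo (0:ℝ) a, ENNReal.ofReal (|x| ^ (-r)))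
        + ∫⁻ x in Ioo (0:ℝ) a, ENNReal.ofReal (|x| ^ (-r)) := by
        congr 1
        · rw [show Ioo (-a) (0:ℝ) = Neg.neg ⁻¹' Ioo (0:ℝ) a from by
            ext x
            simp only [mem_preimage, mem_Ioo]
            constructor <;> rintro ⟨h1, h2⟩ <;> exact ⟨by linarith, by linarith⟩]
          exact lint_reflect (-r) _ measurableSet_Ioo
        · exact (setLIntegral_congr (Ioo_ae_eq_Icc (a := (0:ℝ)) (b := a))).symm
    _ = ENNReal.ofReal (a ^ (1-r) / (1-r)) + ENNReal.ofReal (a ^ (1-r) / (1-r)) := by rw [hpos]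
    _ ≤ ENNReal.ofReal (2 * (a ^ (1-r) / (1-r))) := by
        rw [← ENNReal.ofReal_add (div_nonneg (rpow_nonneg ha.le _) (by linarith)) (div_nonneg (rpow_nonneg ha.le _) (by linarith))]
        apply ENNReal.ofReal_le_ofReal; ring_nf; exact le_rfl

lemma lint_abs_tail (p a : ℝ) (hp : 1 < p) (ha : 0 < a) :
    ∫⁻ x in {x : ℝ | a < |x|}, ENNReal.ofReal (|x| ^ (-p)) ≤ ENNReal.ofReal (2 * (a ^ (1-p) / (p-1))) := by
  have hpos : ∫⁻ x in Ioi a, ENNReal.ofReal (|x| ^ (-p)) = ENNReal.ofReal (a ^ (1-p) / (p-1)) := by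
    rw [setLIntegral_congr_fun measurableSet_Ioi
      (f := fun x => ENNReal.ofReal (|x| ^ (-p))) (g := fun x => ENNReal.ofReal (x ^ (-p)))
      (fun x (hx : x ∈ Ioi a) => by simp only [abs_of_pos (ha.trans hx)])]
    exact lint_Ioi_rpow p a hp ha
  have hsub : {x : ℝ | a < |x|} ⊆ Iio (-a) ∪ Ioi a := by
    intro x hx
    rcases le_or_gt 0 x with h | h
    · right; rwa [mem_setOf_eq, abs_of_nonneg h] at hx
    · left; rw [mem_setOf_eq, abs_of_neg h] at hx; simpa using by linarith
  calc ∫⁻ x in {x : ℝ | a < |x|}, ENNReal.ofReal (|x| ^ (-p))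
      ≤ ∫⁻ x in Iio (-a) ∪ Ioi a, ENNReal.ofReal (|x| ^ (-p)) := lintegral_mono_set hsub
    _ ≤ (∫⁻ x in Iio (-a), ENNReal.ofReal (|x| ^ (-p)))
        + ∫⁻ x in Ioi a, ENNReal.ofReal (|x| ^ (-p)) := lintegral_union_le _ _ _
    _ = (∫⁻ x in Ioi a, ENNReal.ofReal (|x| ^ (-p)))
        + ∫⁻ x in Ioi a, ENNReal.ofReal (|x| ^ (-p)) := by
        congr 1
        rw [show Iio (-a) = Neg.neg ⁻¹' Ioi a from by
          ext x
          simp only [mem_preimage, mem_Iio, mem_Ioi]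
          constructor <;> intro h <;> linarith]
        exact lint_reflect (-p) _ measurableSet_Ioi
    _ = ENNReal.ofReal (a ^ (1-p) / (p-1)) + ENNReal.ofReal (a ^ (1-p) / (p-1)) := by rw [hpos]
    _ ≤ ENNReal.ofReal (2 * (a ^ (1-p) / (p-1))) := by
        rw [← ENNReal.ofReal_add (div_nonneg (rpow_nonneg ha.le _) (by linarith)) (div_nonneg (rpow_nonneg ha.le _) (by linarith))]
        apply ENNReal.ofReal_le_ofReal; ring_nf; exact le_rfl


lemma key_conv (r1 : ℝ) (h1 : 1/2 < r1) (h2 : r1 < 1) (v : ℝ) (hv : 0 < v) :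
    ∫⁻ s : ℝ, ENNReal.ofReal (|s| ^ (-r1) * |s - v| ^ (-r1)) ≤
      ENNReal.ofReal ((4/(1-r1) + 2*4^r1/(2*r1-1)) * (v/2) ^ (1 - 2*r1)) := by
  have ha : (0:ℝ) < v/2 := by linarith
  set a : ℝ := v/2 with ha_def
  set φA : ℝ → ENNReal := (Icc (-a) a).indicator
    (fun s => ENNReal.ofReal (a ^ (-r1)) * ENNReal.ofReal (|s| ^ (-r1))) with hφA
  set φB : ℝ → ENNReal := (Icc (v - a) (v + a)).indicator
    (fun s => ENNReal.ofReal (a ^ (-r1)) * ENNReal.ofReal (|s - v| ^ (-r1))) with hφB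
  set φC : ℝ → ENNReal := {x : ℝ | a < |x|}.indicator
    (fun s => ENNReal.ofReal ((4:ℝ) ^ r1) * ENNReal.ofReal (|s| ^ (-(2*r1)))) with hφC
  have hmeas1 : Measurable fun s : ℝ => ENNReal.ofReal (|s| ^ (-r1)) :=
    (measurable_id.abs.pow_const _).ennreal_ofReal
  have hmeas2 : Measurable fun s : ℝ => ENNReal.ofReal (|s - v| ^ (-r1)) :=
    (((measurable_id.sub measurable_const).abs).pow_const _).ennreal_ofReal
  have hmeas3 : Measurable fun s : ℝ => ENNReal.ofReal (|s| ^ (-(2*r1))) :=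
    (measurable_id.abs.pow_const _).ennreal_ofReal
  have hCs : MeasurableSet {x : ℝ | a < |x|} :=
    measurableSet_lt measurable_const measurable_abs
  -- pointwise bound
  have hpt : ∀ s : ℝ, ENNReal.ofReal (|s| ^ (-r1) * |s - v| ^ (-r1)) ≤ φA s + φB s + φC s := by
    intro s
    by_cases hA : |s| ≤ a
    · have hsv : a ≤ |s - v| := by
        have := abs_sub_abs_le_abs_sub v s
        rw [abs_of_pos hv] at this
        have : v - |s| ≤ |v - s| := by linarith
        rw [abs_sub_comm] at this
        linarith
      have hle : |s| ^ (-r1) * |s - v| ^ (-r1) ≤ a ^ (-r1) * |s| ^ (-r1) := by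
        rw [mul_comm]
        exact mul_le_mul_of_nonneg_right
          (rpow_le_rpow_of_nonpos ha hsv (by linarith)) (rpow_nonneg (abs_nonneg s) _)
      have : ENNReal.ofReal (|s| ^ (-r1) * |s - v| ^ (-r1)) ≤ φA s := by
        rw [hφA, indicator_of_mem (mem_Icc.2 (abs_le.1 hA))]
        rw [← ENNReal.ofReal_mul (rpow_nonneg ha.le _)]
        exact ENNReal.ofReal_le_ofReal hle
      calc ENNReal.ofReal (|s| ^ (-r1) * |s - v| ^ (-r1)) ≤ φA s := this
        _ ≤ φA s + φB s + φC s := by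
            simpa using add_le_add (add_le_add (le_refl (φA s)) (zero_le : 0 ≤ φB s)) (zero_le : 0 ≤ φC s)
    · by_cases hB : |s - v| ≤ a
      · have hs : a ≤ |s| := by
          have := abs_sub_abs_le_abs_sub v (v - s)
          simp only [sub_sub_cancel] at this
          rw [abs_of_pos hv, abs_sub_comm] at this
          linarith
        have hle : |s| ^ (-r1) * |s - v| ^ (-r1) ≤ a ^ (-r1) * |s - v| ^ (-r1) :=
          mul_le_mul_of_nonneg_right
            (rpow_le_rpow_of_nonpos ha hs (by linarith)) (rpow_nonneg (abs_nonneg _) _)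
        have hmem : s ∈ Icc (v - a) (v + a) := by
          rcases abs_le.1 hB with ⟨hb1, hb2⟩
          exact ⟨by linarith, by linarith⟩
        have : ENNReal.ofReal (|s| ^ (-r1) * |s - v| ^ (-r1)) ≤ φB s := by
          rw [hφB, indicator_of_mem hmem, ← ENNReal.ofReal_mul (rpow_nonneg ha.le _)]
          exact ENNReal.ofReal_le_ofReal hle
        calc ENNReal.ofReal (|s| ^ (-r1) * |s - v| ^ (-r1)) ≤ φB s := this
          _ ≤ φA s + φB s + φC s := by
              simpa using add_le_add (add_le_add (zero_le : 0 ≤ φA s) (le_refl (φB s))) (zero_le : 0 ≤ φC s)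
      · push_neg at hA hB
        have hs0 : (0:ℝ) < |s| := lt_trans ha hA
        have hsv4 : |s| / 4 ≤ |s - v| := by
          rcases le_or_gt (|s|) (2*v) with hcase | hcase
          · calc |s| / 4 ≤ v / 2 := by linarith
              _ ≤ |s - v| := hB.le
          · have : v < |s| := by linarith
            have h1' : |s| - v ≤ |s| - |v| := by rw [abs_of_pos hv]
            have h2' : |s| - |v| ≤ |s - v| := by
              have := abs_sub_abs_le_abs_sub s v
              linarith
            linarith
        have h4 : (|s| / 4) ^ (-r1) = 4 ^ r1 * |s| ^ (-r1) := by
          rw [Real.div_rpow (abs_nonneg s) (by norm_num : (0:ℝ) ≤ 4),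
            Real.rpow_neg (by norm_num : (0:ℝ) ≤ 4), div_eq_mul_inv, inv_inv]
          ring
        have hle : |s| ^ (-r1) * |s - v| ^ (-r1) ≤ 4 ^ r1 * |s| ^ (-(2*r1)) := by
          have step1 : |s| ^ (-r1) * |s - v| ^ (-r1) ≤ |s| ^ (-r1) * (|s| / 4) ^ (-r1) :=
            mul_le_mul_of_nonneg_left
              (rpow_le_rpow_of_nonpos (by linarith) hsv4 (by linarith))
              (rpow_nonneg (abs_nonneg s) _)
          have step2 : |s| ^ (-r1) * (|s| / 4) ^ (-r1) = 4 ^ r1 * |s| ^ (-(2*r1)) := by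
            rw [h4, show -(2*r1) = -r1 + -r1 by ring, Real.rpow_add hs0]
            ring
          linarith
        have : ENNReal.ofReal (|s| ^ (-r1) * |s - v| ^ (-r1)) ≤ φC s := by
          rw [hφC, indicator_of_mem (by exact hA : s ∈ {x : ℝ | a < |x|}),
            ← ENNReal.ofReal_mul (rpow_nonneg (by norm_num) _)]
          exact ENNReal.ofReal_le_ofReal hle
        calc ENNReal.ofReal (|s| ^ (-r1) * |s - v| ^ (-r1)) ≤ φC s := this
          _ ≤ φA s + φB s + φC s := by
              simpa using add_le_add (add_le_add (zero_le : 0 ≤ φA s) (zero_le : 0 ≤ φB s)) (le_refl (φC s))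
  -- the three integrals
  have hIA : ∫⁻ s, φA s ≤ ENNReal.ofReal (a ^ (-r1)) * ENNReal.ofReal (2 * (a ^ (1-r1) / (1-r1))) := by
    rw [hφA, lintegral_indicator measurableSet_Icc, lintegral_const_mul _ hmeas1]
    refine mul_le_mul_right ?_ _
    rw [← setLIntegral_congr (Ioo_ae_eq_Icc (a := -a) (b := a))]
    exact lint_abs_Ioo r1 a h2 ha
  have hIB : ∫⁻ s, φB s ≤ ENNReal.ofReal (a ^ (-r1)) * ENNReal.ofReal (2 * (a ^ (1-r1) / (1-r1))) := by
    rw [hφB, lintegral_indicator measurableSet_Icc, lintegral_const_mul _ hmeas2]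
    refine mul_le_mul_right ?_ _
    have htrans : ∫⁻ s in Icc (v - a) (v + a), ENNReal.ofReal (|s - v| ^ (-r1)) =
        ∫⁻ t in Icc (-a) a, ENNReal.ofReal (|t| ^ (-r1)) := by
      rw [← lintegral_indicator measurableSet_Icc, ← lintegral_indicator measurableSet_Icc]
      have : (fun s : ℝ => (Icc (v - a) (v + a)).indicator
          (fun s => ENNReal.ofReal (|s - v| ^ (-r1))) s) =
          fun s : ℝ => (Icc (-a) a).indicator (fun t => ENNReal.ofReal (|t| ^ (-r1))) (s - v) := by
        funext s
        by_cases hmem : s - v ∈ Icc (-a) a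
        · rw [indicator_of_mem hmem,
            indicator_of_mem (by rcases hmem with ⟨hh1, hh2⟩; exact ⟨by linarith, by linarith⟩)]
        · rw [indicator_of_notMem hmem, indicator_of_notMem (fun hmm => hmem
            (by rcases hmm with ⟨hh1, hh2⟩; exact ⟨by linarith, by linarith⟩))]
      rw [this]
      exact lintegral_sub_right_eq_self
        (fun t => (Icc (-a) a).indicator (fun t => ENNReal.ofReal (|t| ^ (-r1))) t) v
    rw [htrans, ← setLIntegral_congr (Ioo_ae_eq_Icc (a := -a) (b := a))]
    exact lint_abs_Ioo r1 a h2 ha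
  have hIC : ∫⁻ s, φC s ≤ ENNReal.ofReal ((4:ℝ) ^ r1) *
      ENNReal.ofReal (2 * (a ^ (1-2*r1) / (2*r1-1))) := by
    rw [hφC, lintegral_indicator hCs, lintegral_const_mul _ hmeas3]
    refine mul_le_mul_right ?_ _
    exact lint_abs_tail (2*r1) a (by linarith) ha
  -- combine
  have hw : (0:ℝ) ≤ a ^ (1 - 2*r1) := rpow_nonneg ha.le _
  have eq1 : a ^ (-r1) * (2 * (a ^ (1-r1) / (1-r1))) = 2/(1-r1) * a ^ (1-2*r1) := by
    rw [show (1:ℝ) - 2*r1 = -r1 + (1-r1) by ring, Real.rpow_add ha]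
    ring
  calc ∫⁻ s, ENNReal.ofReal (|s| ^ (-r1) * |s - v| ^ (-r1))
      ≤ ∫⁻ s, (φA s + φB s + φC s) := lintegral_mono hpt
    _ = (∫⁻ s, φA s) + (∫⁻ s, φB s) + (∫⁻ s, φC s) := by
        rw [lintegral_add_left, lintegral_add_left]
        · exact (measurable_const.mul hmeas1).indicator measurableSet_Icc
        · exact ((measurable_const.mul hmeas1).indicator measurableSet_Icc).add
            ((measurable_const.mul hmeas2).indicator measurableSet_Icc)
    _ ≤ ENNReal.ofReal (a ^ (-r1)) * ENNReal.ofReal (2 * (a ^ (1-r1) / (1-r1)))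
        + ENNReal.ofReal (a ^ (-r1)) * ENNReal.ofReal (2 * (a ^ (1-r1) / (1-r1)))
        + ENNReal.ofReal ((4:ℝ) ^ r1) * ENNReal.ofReal (2 * (a ^ (1-2*r1) / (2*r1-1))) :=
        add_le_add (add_le_add hIA hIB) hIC
    _ = ENNReal.ofReal (2/(1-r1) * a ^ (1-2*r1)) + ENNReal.ofReal (2/(1-r1) * a ^ (1-2*r1))
        + ENNReal.ofReal ((4:ℝ) ^ r1 * (2 * (a ^ (1-2*r1) / (2*r1-1)))) := by
        rw [← ENNReal.ofReal_mul (rpow_nonneg ha.le _), ← ENNReal.ofReal_mul (by positivity), eq1]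
    _ ≤ ENNReal.ofReal ((4/(1-r1) + 2*4^r1/(2*r1-1)) * a ^ (1 - 2*r1)) := by
        have hne1 : (1:ℝ) - r1 ≠ 0 := by linarith
        have hne2 : 2*r1 - 1 ≠ 0 := by linarith
        have hc1 : (0:ℝ) ≤ 2/(1-r1) * a ^ (1-2*r1) :=
          mul_nonneg (div_nonneg (by norm_num) (by linarith)) hw
        have hc3 : (0:ℝ) ≤ 4 ^ r1 * (2 * (a ^ (1-2*r1) / (2*r1-1))) :=
          mul_nonneg (rpow_nonneg (by norm_num) _)
            (mul_nonneg (by norm_num) (div_nonneg hw (by linarith)))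
        rw [← ENNReal.ofReal_add hc1 hc1, ← ENNReal.ofReal_add (by linarith) hc3]
        apply ENNReal.ofReal_le_ofReal
        have heq : 2/(1-r1) * a ^ (1-2*r1) + 2/(1-r1) * a ^ (1-2*r1)
            + 4 ^ r1 * (2 * (a ^ (1-2*r1) / (2*r1-1)))
            = (4/(1-r1) + 2*4^r1/(2*r1-1)) * a ^ (1-2*r1) := by
          field_simp
          ring
        linarith


lemma termB (r1 r2 C : ℝ) (h1 : 1/2 < r1) (h2 : r1 < 1) (hr2 : 0 < r2)
    (hsum : 2 < 2*r1 + r2) (hC : 0 < C) :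
    ∫⁻ s : ℝ, ∫⁻ u : ℝ, ENNReal.ofReal (C * (|s| ^ (-r1) * |u| ^ (-r1)) *
      (|s - u| ^ (-r2) * (Iio (s-1)).indicator 1 u)) < ⊤ := by
  set K0 : ℝ := 4/(1-r1) + 2*4^r1/(2*r1-1) with hK0
  set q : ℝ := 1 - 2*r1 - r2 with hq_def
  set D : ℝ := C * (K0 * (2:ℝ) ^ (2*r1-1)) with hD
  have h4pos : (0:ℝ) < 4 ^ r1 := rpow_pos_of_pos (by norm_num) _
  have hK0pos : 0 < K0 := by
    have hx : (0:ℝ) < 4/(1-r1) := div_pos (by norm_num) (by linarith)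
    have hy : (0:ℝ) < 2*4^r1/(2*r1-1) := div_pos (by linarith) (by linarith)
    rw [hK0]; linarith
  have hDpos : 0 < D := by
    have : (0:ℝ) < (2:ℝ) ^ (2*r1-1) := rpow_pos_of_pos (by norm_num) _
    rw [hD]; positivity
  set G : ℝ → ℝ → ENNReal := fun s v => ENNReal.ofReal (C * (|s| ^ (-r1) * |s - v| ^ (-r1)) *
    (|v| ^ (-r2) * (Ioi (1:ℝ)).indicator 1 v)) with hG
  -- inner substitution u = s - v
  have hsub : ∀ s : ℝ, (∫⁻ u : ℝ, ENNReal.ofReal (C * (|s| ^ (-r1) * |u| ^ (-r1)) *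
      (|s - u| ^ (-r2) * (Iio (s-1)).indicator 1 u))) = ∫⁻ v : ℝ, G s v := by
    intro s
    set g : ℝ → ENNReal := fun u => ENNReal.ofReal (C * (|s| ^ (-r1) * |u| ^ (-r1)) *
      (|s - u| ^ (-r2) * (Iio (s-1)).indicator 1 u)) with hg
    have hgm : Measurable g := by
      apply Measurable.ennreal_ofReal
      exact (measurable_const.mul ((measurable_const.mul
        (measurable_id.abs.pow_const _)))).mul
        ((((measurable_const.sub measurable_id).abs.pow_const _)).mul
          (measurable_one.indicator measurableSet_Iio))
    have step : ∫⁻ v : ℝ, g (s - v) = ∫⁻ u : ℝ, g u := by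
      have e1 : ∀ v : ℝ, g (s - v) = (fun w => g (-w)) (v - s) := by
        intro v; simp only [neg_sub]
      calc ∫⁻ v : ℝ, g (s - v) = ∫⁻ v : ℝ, (fun w => g (-w)) (v - s) :=
            lintegral_congr e1
        _ = ∫⁻ w : ℝ, g (-w) := lintegral_sub_right_eq_self (fun w => g (-w)) s
        _ = ∫⁻ u : ℝ, g u :=
            (Measure.measurePreserving_neg (volume : Measure ℝ)).lintegral_comp hgm
    rw [← step]
    apply lintegral_congr
    intro v
    have hind : (Iio (s-1)).indicator (1 : ℝ → ℝ) (s - v) = (Ioi (1:ℝ)).indicator 1 v := by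
      by_cases hv : 1 < v
      · rw [indicator_of_mem (by simp only [mem_Iio]; linarith : s - v ∈ Iio (s-1)),
          indicator_of_mem (mem_Ioi.2 hv)]
        simp only [Pi.one_apply]
      · rw [indicator_of_notMem (by simp only [mem_Iio]; intro hh; exact hv (by linarith)),
          indicator_of_notMem (fun hmem => hv (mem_Ioi.1 hmem))]
    simp only [hg, hG, sub_sub_cancel, hind]
  have hGm : AEMeasurable (fun p : ℝ × ℝ => G p.1 p.2) (volume.prod volume) := by
    apply Measurable.aemeasurable
    apply Measurable.ennreal_ofReal
    exact (measurable_const.mul ((measurable_fst.abs.pow_const _).mul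
      ((measurable_fst.sub measurable_snd).abs.pow_const _))).mul
      ((measurable_snd.abs.pow_const _).mul
        ((measurable_one.indicator measurableSet_Ioi).comp measurable_snd))
  have hins : ∀ v : ℝ, (∫⁻ s : ℝ, G s v) ≤
      (Ioi (1:ℝ)).indicator (fun v => ENNReal.ofReal D * ENNReal.ofReal (v ^ q)) v := by
    intro v
    by_cases hv : 1 < v
    · have hv0 : (0:ℝ) < v := by linarith
      have habs : |v| = v := abs_of_pos hv0
      have hrw : ∀ s : ℝ, G s v =
          ENNReal.ofReal (C * v ^ (-r2)) * ENNReal.ofReal (|s| ^ (-r1) * |s - v| ^ (-r1)) := by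
        intro s
        rw [hG]
        simp only [indicator_of_mem (mem_Ioi.2 hv), Pi.one_apply, habs]
        rw [← ENNReal.ofReal_mul (by positivity)]
        congr 1
        ring
      calc (∫⁻ s : ℝ, G s v)
          = ENNReal.ofReal (C * v ^ (-r2)) * ∫⁻ s : ℝ,
            ENNReal.ofReal (|s| ^ (-r1) * |s - v| ^ (-r1)) := by
            rw [lintegral_congr hrw]
            exact lintegral_const_mul _ ((measurable_id.abs.pow_const _).mul
              ((measurable_id.sub measurable_const).abs.pow_const _)).ennreal_ofReal
        _ ≤ ENNReal.ofReal (C * v ^ (-r2)) * ENNReal.ofReal (K0 * (v/2) ^ (1 - 2*r1)) :=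
            mul_le_mul_right (key_conv r1 h1 h2 v hv0) _
        _ = ENNReal.ofReal D * ENNReal.ofReal (v ^ q) := by
            rw [← ENNReal.ofReal_mul (by positivity), ← ENNReal.ofReal_mul hDpos.le]
            congr 1
            have e1 : (v/2 : ℝ) ^ (1-2*r1) = v ^ (1-2*r1) * 2 ^ (2*r1-1) := by
              rw [Real.div_rpow hv0.le (by norm_num : (0:ℝ) ≤ 2),
                show (1-2*r1) = -(2*r1-1) by ring,
                Real.rpow_neg (by norm_num : (0:ℝ) ≤ 2), div_eq_mul_inv, inv_inv,
                show -(2*r1-1) = 1-2*r1 by ring]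
            have e2 : v ^ (-r2) * v ^ ((1:ℝ)-2*r1) = v ^ q := by
              rw [← Real.rpow_add hv0, hq_def]
              ring_nf
            rw [e1, hD, ← e2]
            ring
        _ = (Ioi (1:ℝ)).indicator (fun v => ENNReal.ofReal D * ENNReal.ofReal (v ^ q)) v := by
            rw [indicator_of_mem (mem_Ioi.2 hv)]
    · have hvmem : v ∉ Ioi (1:ℝ) := fun hmem => hv (mem_Ioi.1 hmem)
      have hzero : ∀ s : ℝ, G s v = 0 := by
        intro s
        simp [hG, indicator_of_notMem hvmem]
      rw [lintegral_congr hzero]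
      simp
  calc ∫⁻ s : ℝ, ∫⁻ u : ℝ, ENNReal.ofReal (C * (|s| ^ (-r1) * |u| ^ (-r1)) *
        (|s - u| ^ (-r2) * (Iio (s-1)).indicator 1 u))
      = ∫⁻ s : ℝ, ∫⁻ v : ℝ, G s v := lintegral_congr hsub
    _ = ∫⁻ v : ℝ, ∫⁻ s : ℝ, G s v := lintegral_lintegral_swap hGm
    _ ≤ ∫⁻ v : ℝ, (Ioi (1:ℝ)).indicator (fun v => ENNReal.ofReal D * ENNReal.ofReal (v ^ q)) v :=
        lintegral_mono hins
    _ = ENNReal.ofReal D * ∫⁻ v in Ioi (1:ℝ), ENNReal.ofReal (v ^ q) := by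
        rw [lintegral_indicator measurableSet_Ioi]
        exact lintegral_const_mul _ (measurable_id.pow_const _).ennreal_ofReal
    _ < ⊤ := by
        have hq : q < -1 := by rw [hq_def]; linarith
        have hint : IntegrableOn (fun v : ℝ => v ^ q) (Ioi 1) :=
          integrableOn_Ioi_rpow_of_lt hq one_pos
        have : ∫⁻ v in Ioi (1:ℝ), ENNReal.ofReal (v ^ q) < ⊤ := by
          have h2' := (hasFiniteIntegral_iff_norm _).1 hint.2
          refine lt_of_eq_of_lt ?_ h2'
          apply setLIntegral_congr_fun measurableSet_Ioi
          intro v hv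
          dsimp only
          rw [Real.norm_eq_abs, abs_of_nonneg (rpow_nonneg
            (by linarith [mem_Ioi.1 hv] : (0:ℝ) ≤ v) _)]
        exact ENNReal.mul_lt_top ENNReal.ofReal_lt_top this


lemma termA (r1 C : ℝ) (h1 : 1/2 < r1) (h2 : r1 < 1) (hC : 0 < C) :
    ∫⁻ s : ℝ, ∫⁻ u : ℝ, ENNReal.ofReal (C * (|s| ^ (-r1) * |u| ^ (-r1)) *
      (Ico (s-1) s).indicator 1 u) < ⊤ := by
  have hmeasu : Measurable fun u : ℝ => ENNReal.ofReal (|u| ^ (-r1)) :=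
    (measurable_abs.pow_const _).ennreal_ofReal
  have hmeas2 : Measurable fun s : ℝ => ENNReal.ofReal (|s| ^ (-(2*r1))) :=
    (measurable_abs.pow_const _).ennreal_ofReal
  have hCs2 : MeasurableSet {x : ℝ | 2 < |x|} :=
    measurableSet_lt measurable_const measurable_abs
  set M : ENNReal := ∫⁻ u in Ioo (-4:ℝ) 4, ENNReal.ofReal (|u| ^ (-r1)) with hM_def
  have hM : M ≤ ENNReal.ofReal (2 * ((4:ℝ) ^ (1-r1) / (1-r1))) :=
    lint_abs_Ioo r1 4 h2 (by norm_num)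
  have hMlt : M < ⊤ := lt_of_le_of_lt hM ENNReal.ofReal_lt_top
  set h : ℝ → ENNReal := fun s =>
    (Ioo (-3:ℝ) 3).indicator (fun s => ENNReal.ofReal (C * |s| ^ (-r1)) * M) s
    + {x : ℝ | 2 < |x|}.indicator (fun s => ENNReal.ofReal (C * 2^r1 * |s| ^ (-(2*r1)))) s
    with hh
  have hpt : ∀ s : ℝ, (∫⁻ u : ℝ, ENNReal.ofReal (C * (|s| ^ (-r1) * |u| ^ (-r1)) *
      (Ico (s-1) s).indicator 1 u)) ≤ h s := by
    intro s
    by_cases hs : |s| ≤ 2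
    · rcases abs_le.1 hs with ⟨hs1, hs2⟩
      have hptu : ∀ u : ℝ, ENNReal.ofReal (C * (|s| ^ (-r1) * |u| ^ (-r1)) *
          (Ico (s-1) s).indicator 1 u) ≤ (Ioo (-4:ℝ) 4).indicator
          (fun u => ENNReal.ofReal (C * |s| ^ (-r1)) * ENNReal.ofReal (|u| ^ (-r1))) u := by
        intro u
        by_cases hu : u ∈ Ico (s-1) s
        · have humem : u ∈ Ioo (-4:ℝ) 4 := ⟨by linarith [hu.1], by linarith [hu.2]⟩
          rw [indicator_of_mem hu, indicator_of_mem humem, Pi.one_apply, mul_one,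
            ← ENNReal.ofReal_mul (by positivity)]
          apply ENNReal.ofReal_le_ofReal
          rw [mul_assoc]
        · rw [indicator_of_notMem hu, mul_zero, ENNReal.ofReal_zero]
          exact zero_le
      have hsmem : s ∈ Ioo (-3:ℝ) 3 := ⟨by linarith, by linarith⟩
      calc (∫⁻ u : ℝ, ENNReal.ofReal (C * (|s| ^ (-r1) * |u| ^ (-r1)) *
            (Ico (s-1) s).indicator 1 u))
          ≤ ∫⁻ u : ℝ, (Ioo (-4:ℝ) 4).indicator
            (fun u => ENNReal.ofReal (C * |s| ^ (-r1)) * ENNReal.ofReal (|u| ^ (-r1))) u :=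
            lintegral_mono hptu
        _ = ENNReal.ofReal (C * |s| ^ (-r1)) * M := by
            rw [lintegral_indicator measurableSet_Ioo, lintegral_const_mul _ hmeasu]
        _ ≤ h s := by
            rw [hh]
            calc ENNReal.ofReal (C * |s| ^ (-r1)) * M
                = (Ioo (-3:ℝ) 3).indicator (fun s => ENNReal.ofReal (C * |s| ^ (-r1)) * M) s :=
                  (indicator_of_mem hsmem (fun s => ENNReal.ofReal (C * |s| ^ (-r1)) * M)).symm
              _ ≤ _ := self_le_add_right _ _
    · push_neg at hs
      have hs0 : (0:ℝ) < |s| := by linarith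
      have hsmem : s ∈ {x : ℝ | 2 < |x|} := hs
      have hptu : ∀ u : ℝ, ENNReal.ofReal (C * (|s| ^ (-r1) * |u| ^ (-r1)) *
          (Ico (s-1) s).indicator 1 u) ≤ (Ico (s-1) s).indicator
          (fun _ => ENNReal.ofReal (C * 2^r1 * |s| ^ (-(2*r1)))) u := by
        intro u
        by_cases hu : u ∈ Ico (s-1) s
        · have hu2 : |s|/2 ≤ |u| := by
            by_cases hsp : 0 ≤ s
            · have h2s : 2 < s := by rwa [abs_of_nonneg hsp] at hs
              have hup : (0:ℝ) < u := by linarith [hu.1]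
              rw [abs_of_nonneg hsp, abs_of_pos hup]
              linarith [hu.1]
            · push_neg at hsp
              have h2s : s < -2 := by
                rw [abs_of_neg hsp] at hs; linarith
              have hun : u < 0 := by linarith [hu.2]
              rw [abs_of_neg hsp, abs_of_neg hun]
              linarith [hu.2]
          have hr1 : |u| ^ (-r1) ≤ (|s|/2) ^ (-r1) :=
            rpow_le_rpow_of_nonpos (by linarith) hu2 (by linarith)
          have h22 : (|s|/2) ^ (-r1) = 2^r1 * |s| ^ (-r1) := by
            rw [Real.div_rpow (abs_nonneg s) (by norm_num : (0:ℝ) ≤ 2),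
              Real.rpow_neg (by norm_num : (0:ℝ) ≤ 2), div_eq_mul_inv, inv_inv]
            ring
          have hle : C * (|s| ^ (-r1) * |u| ^ (-r1)) ≤ C * 2^r1 * |s| ^ (-(2*r1)) := by
            have step1 : |s| ^ (-r1) * |u| ^ (-r1) ≤ |s| ^ (-r1) * ((|s|/2) ^ (-r1)) :=
              mul_le_mul_of_nonneg_left hr1 (rpow_nonneg (abs_nonneg s) _)
            have step2 : |s| ^ (-r1) * ((|s|/2) ^ (-r1)) = 2^r1 * |s| ^ (-(2*r1)) := by
              rw [h22, show -(2*r1) = -r1 + -r1 by ring, Real.rpow_add hs0]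
              ring
            have : |s| ^ (-r1) * |u| ^ (-r1) ≤ 2^r1 * |s| ^ (-(2*r1)) := by linarith
            calc C * (|s| ^ (-r1) * |u| ^ (-r1)) ≤ C * (2^r1 * |s| ^ (-(2*r1))) :=
                  mul_le_mul_of_nonneg_left this hC.le
              _ = C * 2^r1 * |s| ^ (-(2*r1)) := by ring
          rw [indicator_of_mem hu, indicator_of_mem hu, Pi.one_apply, mul_one]
          exact ENNReal.ofReal_le_ofReal hle
        · rw [indicator_of_notMem hu, indicator_of_notMem hu, mul_zero, ENNReal.ofReal_zero]
      calc (∫⁻ u : ℝ, ENNReal.ofReal (C * (|s| ^ (-r1) * |u| ^ (-r1)) *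
            (Ico (s-1) s).indicator 1 u))
          ≤ ∫⁻ u : ℝ, (Ico (s-1) s).indicator
            (fun _ => ENNReal.ofReal (C * 2^r1 * |s| ^ (-(2*r1)))) u := lintegral_mono hptu
        _ = ENNReal.ofReal (C * 2^r1 * |s| ^ (-(2*r1))) * volume (Ico (s-1) s) :=
            lintegral_indicator_const measurableSet_Ico _
        _ = ENNReal.ofReal (C * 2^r1 * |s| ^ (-(2*r1))) := by
            rw [Real.volume_Ico, show s - (s-1) = (1:ℝ) by ring, ENNReal.ofReal_one, mul_one]
        _ ≤ h s := by
            rw [hh]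
            calc ENNReal.ofReal (C * 2^r1 * |s| ^ (-(2*r1)))
                = {x : ℝ | 2 < |x|}.indicator
                  (fun s => ENNReal.ofReal (C * 2^r1 * |s| ^ (-(2*r1)))) s :=
                  (indicator_of_mem hsmem (fun s => ENNReal.ofReal (C * 2^r1 * |s| ^ (-(2*r1))))).symm
              _ ≤ _ := le_add_self
  calc ∫⁻ s : ℝ, ∫⁻ u : ℝ, ENNReal.ofReal (C * (|s| ^ (-r1) * |u| ^ (-r1)) *
        (Ico (s-1) s).indicator 1 u)
      ≤ ∫⁻ s : ℝ, h s := lintegral_mono hpt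
    _ = (∫⁻ s : ℝ, (Ioo (-3:ℝ) 3).indicator (fun s => ENNReal.ofReal (C * |s| ^ (-r1)) * M) s)
        + ∫⁻ s : ℝ, {x : ℝ | 2 < |x|}.indicator
          (fun s => ENNReal.ofReal (C * 2^r1 * |s| ^ (-(2*r1)))) s := by
        rw [hh]
        exact lintegral_add_left
          (((measurable_const.mul (measurable_abs.pow_const _)).ennreal_ofReal.mul_const
            M).indicator measurableSet_Ioo) _
    _ < ⊤ := by
        have hfin1 : (∫⁻ s : ℝ, (Ioo (-3:ℝ) 3).indicator
            (fun s => ENNReal.ofReal (C * |s| ^ (-r1)) * M) s) < ⊤ := by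
          rw [lintegral_indicator measurableSet_Ioo,
            lintegral_mul_const (f := fun s : ℝ => ENNReal.ofReal (C * |s| ^ (-r1))) _ (measurable_const.mul
              (measurable_abs.pow_const _)).ennreal_ofReal]
          have heq : ∫⁻ s in Ioo (-3:ℝ) 3, ENNReal.ofReal (C * |s| ^ (-r1))
              = ENNReal.ofReal C * ∫⁻ s in Ioo (-3:ℝ) 3, ENNReal.ofReal (|s| ^ (-r1)) := by
            rw [← lintegral_const_mul _ hmeasu]
            apply lintegral_congr
            intro s
            rw [← ENNReal.ofReal_mul hC.le]
          have hle3 := lint_abs_Ioo r1 3 h2 (by norm_num)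
          refine ENNReal.mul_lt_top ?_ hMlt
          rw [heq]
          exact ENNReal.mul_lt_top ENNReal.ofReal_lt_top
            (lt_of_le_of_lt hle3 ENNReal.ofReal_lt_top)
        have hfin2 : (∫⁻ s : ℝ, {x : ℝ | 2 < |x|}.indicator
            (fun s => ENNReal.ofReal (C * 2^r1 * |s| ^ (-(2*r1)))) s) < ⊤ := by
          rw [lintegral_indicator hCs2]
          have heq : ∫⁻ s in {x : ℝ | 2 < |x|}, ENNReal.ofReal (C * 2^r1 * |s| ^ (-(2*r1)))
              = ENNReal.ofReal (C * 2^r1) * ∫⁻ s in {x : ℝ | 2 < |x|},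
                ENNReal.ofReal (|s| ^ (-(2*r1))) := by
            rw [← lintegral_const_mul _ hmeas2]
            apply lintegral_congr
            intro s
            rw [← ENNReal.ofReal_mul (by positivity)]
          have hle2 := lint_abs_tail (2*r1) 2 (by linarith) (by norm_num)
          rw [heq]
          exact ENNReal.mul_lt_top ENNReal.ofReal_lt_top
            (lt_of_le_of_lt hle2 ENNReal.ofReal_lt_top)
        exact ENNReal.add_lt_top.2 ⟨hfin1, hfin2⟩
/-- Lemma 3.2 of the paper: integrability of a function dominated by
`C * |s|^{-r1} |u|^{-r1} (1_{[s-1,s)}(u) + |s-u|^{-r2} 1_{(-∞,s-1)}(u))`. -/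
theorem integrable_of_kernel_bound
    (r1 r2 C : ℝ) (hr1 : 1 / 2 < r1) (hr1' : r1 < 1) (hr2 : 0 < r2)
    (hsum : 2 < 2 * r1 + r2) (hC : 0 < C)
    (f : ℝ → ℝ → ℂ) (hf : Measurable (fun p : ℝ × ℝ => f p.1 p.2))
    (hbound : ∀ s u : ℝ, s ≠ 0 → u ≠ 0 →
      ‖f s u‖ ≤ C * (|s| ^ (-r1) * |u| ^ (-r1)) *
        ((Ico (s - 1) s).indicator 1 u + |s - u| ^ (-r2) * (Iio (s - 1)).indicator 1 u)) :
    ∫⁻ s : ℝ, ∫⁻ u : ℝ, ENNReal.ofReal ‖f s u‖ < ⊤ := by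
  set k1 : ℝ → ℝ → ENNReal := fun s u => ENNReal.ofReal (C * (|s| ^ (-r1) * |u| ^ (-r1)) *
    (Ico (s-1) s).indicator 1 u) with hk1
  set k2 : ℝ → ℝ → ENNReal := fun s u => ENNReal.ofReal (C * (|s| ^ (-r1) * |u| ^ (-r1)) *
    (|s - u| ^ (-r2) * (Iio (s-1)).indicator 1 u)) with hk2
  have hae : ∀ᵐ x : ℝ, x ≠ (0:ℝ) := by
    rw [ae_iff]
    simp only [ne_eq, not_not, setOf_eq_eq_singleton]
    exact measure_singleton 0
  -- measurability of uncurried kernels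
  have hk1m : Measurable (fun p : ℝ × ℝ => k1 p.1 p.2) := by
    rw [hk1]
    apply Measurable.ennreal_ofReal
    apply Measurable.mul
    · exact measurable_const.mul ((measurable_fst.abs.pow_const _).mul
        (measurable_snd.abs.pow_const _))
    · have heq : (fun p : ℝ × ℝ => (Ico (p.1-1) p.1).indicator (1 : ℝ → ℝ) p.2)
          = fun p : ℝ × ℝ => {q : ℝ × ℝ | q.1 - 1 ≤ q.2 ∧ q.2 < q.1}.indicator
            (1 : ℝ × ℝ → ℝ) p := by
        funext p
        by_cases hp : p.1 - 1 ≤ p.2 ∧ p.2 < p.1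
        · rw [indicator_of_mem (mem_Ico.2 hp), indicator_of_mem (by exact hp)]
          simp only [Pi.one_apply]
        · rw [indicator_of_notMem (fun hm => hp (mem_Ico.1 hm)),
            indicator_of_notMem (by exact hp)]
      exact heq ▸ measurable_one.indicator
        ((measurableSet_le (measurable_fst.sub measurable_const) measurable_snd).inter
          (measurableSet_lt measurable_snd measurable_fst))
  have hk2m : Measurable (fun p : ℝ × ℝ => k2 p.1 p.2) := by
    rw [hk2]
    apply Measurable.ennreal_ofReal
    apply Measurable.mul
    · exact measurable_const.mul ((measurable_fst.abs.pow_const _).mul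
        (measurable_snd.abs.pow_const _))
    · apply Measurable.mul
      · exact (measurable_fst.sub measurable_snd).abs.pow_const _
      · have heq : (fun p : ℝ × ℝ => (Iio (p.1-1)).indicator (1 : ℝ → ℝ) p.2)
            = fun p : ℝ × ℝ => {q : ℝ × ℝ | q.2 < q.1 - 1}.indicator (1 : ℝ × ℝ → ℝ) p := by
          funext p
          by_cases hp : p.2 < p.1 - 1
          · rw [indicator_of_mem (mem_Iio.2 hp), indicator_of_mem (by exact hp)]
            simp only [Pi.one_apply]
          · rw [indicator_of_notMem (fun hm => hp (mem_Iio.1 hm)),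
              indicator_of_notMem (by exact hp)]
        exact heq ▸ measurable_one.indicator
          (measurableSet_lt measurable_snd (measurable_fst.sub measurable_const))
  have g1m : Measurable fun s : ℝ => ∫⁻ u : ℝ, k1 s u := Measurable.lintegral_prod_right' hk1m
  -- inner pointwise bound
  have h_inner : ∀ s : ℝ, s ≠ 0 →
      (∫⁻ u : ℝ, ENNReal.ofReal ‖f s u‖) ≤ (∫⁻ u : ℝ, k1 s u) + ∫⁻ u : ℝ, k2 s u := by
    intro s hs
    have hmono : (∫⁻ u : ℝ, ENNReal.ofReal ‖f s u‖) ≤ ∫⁻ u : ℝ, (k1 s u + k2 s u) := by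
      apply lintegral_mono_ae
      filter_upwards [hae] with u hu
      calc ENNReal.ofReal ‖f s u‖
          ≤ ENNReal.ofReal (C * (|s| ^ (-r1) * |u| ^ (-r1)) *
            ((Ico (s-1) s).indicator 1 u + |s - u| ^ (-r2) * (Iio (s-1)).indicator 1 u)) :=
            ENNReal.ofReal_le_ofReal (hbound s u hs hu)
        _ = ENNReal.ofReal (C * (|s| ^ (-r1) * |u| ^ (-r1)) * (Ico (s-1) s).indicator 1 u
            + C * (|s| ^ (-r1) * |u| ^ (-r1)) *
              (|s - u| ^ (-r2) * (Iio (s-1)).indicator 1 u)) := by rw [mul_add]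
        _ ≤ k1 s u + k2 s u := ENNReal.ofReal_add_le
    refine hmono.trans (le_of_eq ?_)
    have hk1um : Measurable fun u : ℝ => k1 s u := by
      rw [hk1]
      exact ((measurable_const.mul ((measurable_const.mul
        (measurable_abs.pow_const _)))).mul
        (measurable_one.indicator measurableSet_Ico)).ennreal_ofReal
    exact lintegral_add_left hk1um _
  calc ∫⁻ s : ℝ, ∫⁻ u : ℝ, ENNReal.ofReal ‖f s u‖
      ≤ ∫⁻ s : ℝ, ((∫⁻ u : ℝ, k1 s u) + ∫⁻ u : ℝ, k2 s u) := by
        apply lintegral_mono_ae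
        filter_upwards [hae] with s hs
        exact h_inner s hs
    _ = (∫⁻ s : ℝ, ∫⁻ u : ℝ, k1 s u) + ∫⁻ s : ℝ, ∫⁻ u : ℝ, k2 s u :=
        lintegral_add_left g1m _
    _ < ⊤ := ENNReal.add_lt_top.2
        ⟨termA r1 C hr1 hr1' hC, termB r1 r2 C hr1 hr1' hr2 hsum hC⟩
end

section
/- Let α ∈ (0,2) and H ∈ (1/2, 1) satisfy α(1−H) < 1/2, set γ = 1 − H − 1/α, and define h(s,u) = ((1 − exp(i(s−u)))/(i(s−u))) · |s·u|^γ for u < s and h(s,u) = 0 for u ≥ s. Then ∫_ℝ ∫_ℝ ‖h(s,u)‖^α ds du < ∞. -/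
open MeasureTheory Set

/-- If `f` is integrable, then `∫⁻ ofReal (f x) < ∞`. -/
lemma aux_lint_lt_top {μ : Measure ℝ} {f : ℝ → ℝ} (hf : Integrable f μ) :
    ∫⁻ x, ENNReal.ofReal (f x) ∂μ < ⊤ := by
  refine lt_of_le_of_lt (lintegral_mono fun x => ?_) hf.2
  rw [Real.enorm_eq_ofReal_abs]
  exact ENNReal.ofReal_le_ofReal (le_abs_self _)

lemma aux_abs_II {c : ℝ} (hc1 : -1 < c) (a b : ℝ) :
    IntervalIntegrable (fun x : ℝ => |x| ^ c) volume a b := by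
  have key : ∀ b : ℝ, IntervalIntegrable (fun x : ℝ => |x| ^ c) volume 0 b := by
    have pos : ∀ b : ℝ, 0 ≤ b → IntervalIntegrable (fun x : ℝ => |x| ^ c) volume 0 b := by
      intro b hb
      have h1 : IntervalIntegrable (fun x : ℝ => x ^ c) volume 0 b :=
        intervalIntegral.intervalIntegrable_rpow' hc1
      rw [intervalIntegrable_iff, uIoc_of_le hb] at h1 ⊢
      exact h1.congr_fun (fun x hx => by rw [abs_of_pos hx.1]) measurableSet_Ioc
    intro b
    rcases le_total 0 b with hb | hb
    · exact pos b hb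
    · have h2 := pos (-b) (by linarith)
      rw [IntervalIntegrable.iff_comp_neg] at h2
      simpa using h2
  exact ((key a).symm.trans (key b))

lemma aux_abs_Icc {c : ℝ} (hc1 : -1 < c) (a lo hi : ℝ) (hle : lo ≤ hi) :
    IntegrableOn (fun x : ℝ => |x + a| ^ c) (Icc lo hi) := by
  rw [integrableOn_Icc_iff_integrableOn_Ioc]
  have h1 := (aux_abs_II hc1 (lo + a) (hi + a)).comp_add_right a
  rw [intervalIntegrable_iff, uIoc_of_le (by linarith)] at h1
  simpa using h1

lemma aux_abs_Iio {d : ℝ} (hd : d < -1) :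
    IntegrableOn (fun v : ℝ => |v| ^ d) (Iio (-2)) := by
  have h1 : IntegrableOn (fun v : ℝ => |v| ^ d) (Ioi 2) :=
    (integrableOn_Ioi_rpow_of_lt hd two_pos).congr_fun
      (fun x hx => by rw [abs_of_pos (by linarith [mem_Ioi.1 hx] : (0:ℝ) < x)])
      measurableSet_Ioi
  have h2 : Integrable ((Ioi (2:ℝ)).indicator fun v => |v| ^ d) volume :=
    (integrable_indicator_iff measurableSet_Ioi).2 h1
  have h3 := h2.comp_neg
  have heq : (fun x : ℝ => (Ioi (2:ℝ)).indicator (fun v => |v| ^ d) (-x))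
      = (Iio (-2:ℝ)).indicator fun v => |v| ^ d := by
    funext x
    simp only [Set.indicator, mem_Ioi, mem_Iio, abs_neg]
    by_cases hx : x < -2
    · rw [if_pos (by linarith : (2:ℝ) < -x), if_pos hx]
    · rw [if_neg (fun hh => hx (by linarith)), if_neg hx]
  rw [heq] at h3
  exact (integrable_indicator_iff measurableSet_Iio).1 h3

lemma aux_B_integrable {c : ℝ} (hc1 : -1 < c) (hc2 : c < -1/2) :
    Integrable (fun v : ℝ => |v + 1| ^ c * |v| ^ c) volume := by
  have hc0 : c ≤ 0 := by linarith
  have mf : Measurable fun v : ℝ => |v + 1| ^ c * |v| ^ c :=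
    (((measurable_id.add_const 1).abs).pow_const c).mul (measurable_abs.pow_const c)
  have fnonneg : ∀ v : ℝ, 0 ≤ |v + 1| ^ c * |v| ^ c := fun v =>
    mul_nonneg (Real.rpow_nonneg (abs_nonneg _) c) (Real.rpow_nonneg (abs_nonneg _) c)
  -- piece on (1, ∞)
  have h1 : IntegrableOn (fun v : ℝ => |v + 1| ^ c * |v| ^ c) (Ioi 1) := by
    have hg : IntegrableOn (fun v : ℝ => v ^ (c + c)) (Ioi 1) :=
      integrableOn_Ioi_rpow_of_lt (by linarith) one_pos
    refine hg.mono' mf.aestronglyMeasurable ?_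
    rw [ae_restrict_iff' measurableSet_Ioi]
    refine ae_of_all _ fun v hv => ?_
    have hv1 : (1:ℝ) < v := hv
    have hvpos : (0:ℝ) < v := by linarith
    rw [Real.norm_eq_abs, abs_of_nonneg (fnonneg v)]
    have e1 : |v + 1| ^ c ≤ v ^ c := by
      rw [abs_of_pos (by linarith : (0:ℝ) < v + 1)]
      exact Real.rpow_le_rpow_of_nonpos hvpos (by linarith) hc0
    have e2 : |v| ^ c = v ^ c := by rw [abs_of_pos hvpos]
    calc |v + 1| ^ c * |v| ^ c ≤ v ^ c * v ^ c := by
          rw [e2]; exact mul_le_mul_of_nonneg_right e1 (Real.rpow_nonneg hvpos.le c)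
      _ = v ^ (c + c) := (Real.rpow_add hvpos c c).symm
  -- piece on (-∞, -2)
  have h2 : IntegrableOn (fun v : ℝ => |v + 1| ^ c * |v| ^ c) (Iio (-2)) := by
    have hg : IntegrableOn (fun v : ℝ => 2 ^ (-c) * |v| ^ (c + c)) (Iio (-2)) :=
      (aux_abs_Iio (by linarith : c + c < -1)).const_mul _
    refine hg.mono' mf.aestronglyMeasurable ?_
    rw [ae_restrict_iff' measurableSet_Iio]
    refine ae_of_all _ fun v hv => ?_
    have hv2 : v < -2 := hv
    have habs : (0:ℝ) < |v| := by rw [abs_of_neg (by linarith)]; linarith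
    rw [Real.norm_eq_abs, abs_of_nonneg (fnonneg v)]
    have e1 : |v + 1| ^ c ≤ (|v| / 2) ^ c := by
      refine Real.rpow_le_rpow_of_nonpos (by linarith) ?_ hc0
      rw [abs_of_neg (by linarith : v + 1 < 0), abs_of_neg (by linarith : v < 0)]
      linarith
    have e2 : (|v| / 2) ^ c = 2 ^ (-c) * |v| ^ c := by
      rw [Real.div_rpow (abs_nonneg v) (by norm_num : (0:ℝ) ≤ 2),
        Real.rpow_neg (by norm_num : (0:ℝ) ≤ 2), div_eq_mul_inv, mul_comm]
    have e3 : |v| ^ c * |v| ^ c = |v| ^ (c + c) := (Real.rpow_add habs c c).symm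
    calc |v + 1| ^ c * |v| ^ c ≤ 2 ^ (-c) * |v| ^ c * |v| ^ c := by
          refine mul_le_mul_of_nonneg_right (e1.trans_eq e2) (Real.rpow_nonneg (abs_nonneg _) c)
      _ = 2 ^ (-c) * |v| ^ (c + c) := by rw [mul_assoc, e3]
  -- piece on [-2, -1/2]
  have h3 : IntegrableOn (fun v : ℝ => |v + 1| ^ c * |v| ^ c) (Icc (-2) (-1/2)) := by
    have hg : IntegrableOn (fun v : ℝ => 2 ^ (-c) * |v + 1| ^ c) (Icc (-2) (-1/2)) :=
      (aux_abs_Icc hc1 1 (-2) (-1/2) (by norm_num)).const_mul _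
    refine hg.mono' mf.aestronglyMeasurable ?_
    rw [ae_restrict_iff' measurableSet_Icc]
    refine ae_of_all _ fun v hv => ?_
    obtain ⟨hva, hvb⟩ := hv
    rw [Real.norm_eq_abs, abs_of_nonneg (fnonneg v)]
    have habs : (1/2 : ℝ) ≤ |v| := by rw [abs_of_neg (by linarith)]; linarith
    have e1 : |v| ^ c ≤ 2 ^ (-c) := by
      have := Real.rpow_le_rpow_of_nonpos (by norm_num : (0:ℝ) < 1/2) habs hc0
      calc |v| ^ c ≤ (1/2 : ℝ) ^ c := this
        _ = 2 ^ (-c) := by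
            rw [Real.rpow_neg (by norm_num : (0:ℝ) ≤ 2), one_div, Real.inv_rpow (by norm_num)]
    calc |v + 1| ^ c * |v| ^ c ≤ |v + 1| ^ c * 2 ^ (-c) :=
          mul_le_mul_of_nonneg_left e1 (Real.rpow_nonneg (abs_nonneg _) c)
      _ = 2 ^ (-c) * |v + 1| ^ c := mul_comm _ _
  -- piece on [-1/2, 1]
  have h4 : IntegrableOn (fun v : ℝ => |v + 1| ^ c * |v| ^ c) (Icc (-1/2) 1) := by
    have hg : IntegrableOn (fun v : ℝ => 2 ^ (-c) * |v| ^ c) (Icc (-1/2) 1) := by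
      have := aux_abs_Icc hc1 0 (-1/2) 1 (by norm_num)
      simp only [add_zero] at this
      exact this.const_mul _
    refine hg.mono' mf.aestronglyMeasurable ?_
    rw [ae_restrict_iff' measurableSet_Icc]
    refine ae_of_all _ fun v hv => ?_
    obtain ⟨hva, hvb⟩ := hv
    rw [Real.norm_eq_abs, abs_of_nonneg (fnonneg v)]
    have habs : (1/2 : ℝ) ≤ |v + 1| := by rw [abs_of_nonneg (by linarith)]; linarith
    have e1 : |v + 1| ^ c ≤ 2 ^ (-c) := by
      have := Real.rpow_le_rpow_of_nonpos (by norm_num : (0:ℝ) < 1/2) habs hc0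
      calc |v + 1| ^ c ≤ (1/2 : ℝ) ^ c := this
        _ = 2 ^ (-c) := by
            rw [Real.rpow_neg (by norm_num : (0:ℝ) ≤ 2), one_div, Real.inv_rpow (by norm_num)]
    exact mul_le_mul_of_nonneg_right e1 (Real.rpow_nonneg (abs_nonneg _) c)
  rw [← integrableOn_univ]
  refine ((h2.union h3).union (h4.union h1)).mono_set fun x _ => ?_
  simp only [mem_union, mem_Iio, mem_Icc, mem_Ioi]
  rcases lt_or_ge x (-2) with hx | hx
  · exact Or.inl (Or.inl hx)
  rcases le_or_gt x (-1/2) with hx2 | hx2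
  · exact Or.inl (Or.inr ⟨hx, hx2⟩)
  rcases le_or_gt x 1 with hx3 | hx3
  · exact Or.inr (Or.inl ⟨hx2.le, hx3⟩)
  · exact Or.inr (Or.inr hx3)

lemma aux_T_integrable {m α : ℝ} (hm1 : -1 < m) (hα : 0 < α) (hm3 : m - α < -1) :
    IntegrableOn (fun t : ℝ => (1 + t) ^ (-α) * t ^ m) (Ioi 0) := by
  have mf : Measurable fun t : ℝ => (1 + t) ^ (-α) * t ^ m :=
    ((measurable_const.add measurable_id).pow_const (-α)).mul (measurable_id.pow_const m)
  have fnonneg : ∀ t : ℝ, t ∈ Ioi (0:ℝ) → 0 ≤ (1 + t) ^ (-α) * t ^ m := fun t ht =>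
    mul_nonneg (Real.rpow_nonneg (by linarith [mem_Ioi.1 ht]) _)
      (Real.rpow_nonneg (le_of_lt ht) _)
  have h1 : IntegrableOn (fun t : ℝ => (1 + t) ^ (-α) * t ^ m) (Ioo 0 2) := by
    have hg : IntegrableOn (fun t : ℝ => t ^ m) (Ioo 0 2) :=
      (intervalIntegral.integrableOn_Ioo_rpow_iff two_pos).2 hm1
    refine hg.mono' mf.aestronglyMeasurable ?_
    rw [ae_restrict_iff' measurableSet_Ioo]
    refine ae_of_all _ fun t ht => ?_
    have ht0 : (0:ℝ) < t := ht.1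
    rw [Real.norm_eq_abs, abs_of_nonneg (fnonneg t ht0)]
    have : (1 + t) ^ (-α) ≤ 1 :=
      Real.rpow_le_one_of_one_le_of_nonpos (by linarith) (by linarith)
    exact mul_le_of_le_one_left (Real.rpow_nonneg ht0.le m) this
  have h2 : IntegrableOn (fun t : ℝ => (1 + t) ^ (-α) * t ^ m) (Ioi 1) := by
    have hg : IntegrableOn (fun t : ℝ => t ^ (-α + m)) (Ioi 1) :=
      integrableOn_Ioi_rpow_of_lt (by linarith) one_pos
    refine hg.mono' mf.aestronglyMeasurable ?_
    rw [ae_restrict_iff' measurableSet_Ioi]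
    refine ae_of_all _ fun t ht => ?_
    have ht1 : (1:ℝ) < t := ht
    have ht0 : (0:ℝ) < t := by linarith
    rw [Real.norm_eq_abs, abs_of_nonneg (fnonneg t ht0)]
    have e1 : (1 + t) ^ (-α) ≤ t ^ (-α) :=
      Real.rpow_le_rpow_of_nonpos ht0 (by linarith) (by linarith)
    calc (1 + t) ^ (-α) * t ^ m ≤ t ^ (-α) * t ^ m :=
          mul_le_mul_of_nonneg_right e1 (Real.rpow_nonneg ht0.le m)
      _ = t ^ (-α + m) := (Real.rpow_add ht0 _ _).symm
  refine (h1.union h2).mono_set fun x hx => ?_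
  simp only [mem_union, mem_Ioo, mem_Ioi] at hx ⊢
  rcases lt_or_ge x 2 with h | h
  · exact Or.inl ⟨hx, h⟩
  · exact Or.inr (by linarith)

/-- The limiting kernel `h(s,u) = ((1 - e^{i(s-u)})/(i(s-u))) |s|^γ |u|^γ 1_{u<s}` satisfies
`∫∫ ‖h(s,u)‖^α ds du < ∞` when `H ∈ (1/2,1)` and `α(1-H) < 1/2`. -/
theorem limit_kernel_h_alpha_integrable (α H : ℝ) (hα : α ∈ Ioo (0 : ℝ) 2)
    (hH : H ∈ Ioo (1 / 2 : ℝ) 1) (hαH : α * (1 - H) < 1 / 2)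
    (γ : ℝ) (hγ : γ = 1 - H - 1 / α)
    (h : ℝ → ℝ → ℂ)
    (hdef : ∀ s u : ℝ, h s u = if u < s then
        (1 - Complex.exp (Complex.I * ((s : ℂ) - (u : ℂ)))) / (Complex.I * ((s : ℂ) - (u : ℂ))) *
          ((|s| ^ γ * |u| ^ γ : ℝ) : ℂ)
      else 0) :
    ∫⁻ u : ℝ, ∫⁻ s : ℝ, ENNReal.ofReal (‖h s u‖ ^ α) < ⊤ := by
  obtain ⟨hα0, hα2⟩ := hα
  obtain ⟨hH1, hH2⟩ := hH
  set c : ℝ := γ * α with hc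
  have hca : c = α * (1 - H) - 1 := by
    rw [hc, hγ]; field_simp
  have hprod : 0 < α * (1 - H) := mul_pos hα0 (by linarith)
  have hc1 : (-1 : ℝ) < c := by rw [hca]; linarith
  have hc2 : c < -1/2 := by rw [hca]; linarith
  have hc0 : c ≤ 0 := by linarith
  -- the pointwise bound
  have key : ∀ u s : ℝ, u < s →
      ‖h s u‖ ^ α ≤ 4 ^ α * (1 + (s - u)) ^ (-α) * (|s| ^ c * |u| ^ c) := by
    intro u s hus
    set t : ℝ := s - u with ht
    have ht0 : 0 < t := sub_pos.2 hus
    have hsc : ((s : ℂ) - (u : ℂ)) = (t : ℂ) := by rw [ht]; push_cast; ring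
    have hnorm : ‖h s u‖ ≤ 4 / (1 + t) * (|s| ^ γ * |u| ^ γ) := by
      rw [hdef, if_pos hus, hsc, norm_mul]
      have h2 : ‖((|s| ^ γ * |u| ^ γ : ℝ) : ℂ)‖ = |s| ^ γ * |u| ^ γ := by
        rw [Complex.norm_real, Real.norm_eq_abs, abs_of_nonneg
          (mul_nonneg (Real.rpow_nonneg (abs_nonneg _) _) (Real.rpow_nonneg (abs_nonneg _) _))]
      rw [h2]
      refine mul_le_mul_of_nonneg_right ?_
        (mul_nonneg (Real.rpow_nonneg (abs_nonneg _) _) (Real.rpow_nonneg (abs_nonneg _) _))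
      have hden : ‖Complex.I * (t : ℂ)‖ = t := by
        rw [norm_mul, Complex.norm_I, one_mul, Complex.norm_real, Real.norm_eq_abs,
          abs_of_pos ht0]
      rw [norm_div, hden]
      have hnum : ‖1 - Complex.exp (Complex.I * (t : ℂ))‖ ≤ 2 * min t 1 := by
        rcases le_total t 1 with h1 | h1
        · rw [min_eq_left h1, norm_sub_rev]
          have : ‖Complex.I * (t : ℂ)‖ ≤ 1 := by
            rw [norm_mul, Complex.norm_I, one_mul, Complex.norm_real, Real.norm_eq_abs, abs_of_pos ht0]
            exact h1
          have := Complex.norm_exp_sub_one_le this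
          rw [norm_mul, Complex.norm_I, one_mul, Complex.norm_real, Real.norm_eq_abs, abs_of_pos ht0] at this
          calc ‖Complex.exp (Complex.I * (t : ℂ)) - 1‖
              = ‖Complex.exp (Complex.I * (t : ℂ)) - 1‖ := rfl
            _ ≤ 2 * t := this
        · rw [min_eq_right h1]
          have he : ‖Complex.exp (Complex.I * (t : ℂ))‖ = 1 := by
            rw [mul_comm]
            exact Complex.norm_exp_ofReal_mul_I t
          calc ‖1 - Complex.exp (Complex.I * (t : ℂ))‖
              ≤ ‖(1 : ℂ)‖ + ‖Complex.exp (Complex.I * (t : ℂ))‖ := norm_sub_le _ _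
            _ = 2 := by rw [he, norm_one]; norm_num
            _ = 2 * 1 := (mul_one 2).symm
      rw [div_le_div_iff₀ ht0 (by linarith)]
      rcases le_total t 1 with h1 | h1
      · rw [min_eq_left h1] at hnum
        nlinarith [norm_nonneg (1 - Complex.exp (Complex.I * (t : ℂ)))]
      · rw [min_eq_right h1] at hnum
        nlinarith [norm_nonneg (1 - Complex.exp (Complex.I * (t : ℂ)))]
    have hbase : 0 ≤ 4 / (1 + t) * (|s| ^ γ * |u| ^ γ) := by
      have : (0:ℝ) < 1 + t := by linarith
      positivity
    calc ‖h s u‖ ^ α ≤ (4 / (1 + t) * (|s| ^ γ * |u| ^ γ)) ^ α :=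
          Real.rpow_le_rpow (norm_nonneg _) hnorm hα0.le
      _ = (4 / (1 + t)) ^ α * ((|s| ^ γ) ^ α * (|u| ^ γ) ^ α) := by
          rw [Real.mul_rpow (div_nonneg (by norm_num) (by linarith)) (mul_nonneg (Real.rpow_nonneg (abs_nonneg _) _)
            (Real.rpow_nonneg (abs_nonneg _) _)),
            Real.mul_rpow (Real.rpow_nonneg (abs_nonneg _) _) (Real.rpow_nonneg (abs_nonneg _) _)]
      _ = 4 ^ α * (1 + t) ^ (-α) * (|s| ^ c * |u| ^ c) := by
          rw [Real.div_rpow (by norm_num) (by linarith : (0:ℝ) ≤ 1 + t),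
            Real.rpow_neg (by linarith : (0:ℝ) ≤ 1 + t), div_eq_mul_inv,
            ← Real.rpow_mul (abs_nonneg s), ← Real.rpow_mul (abs_nonneg u), ← hc]
  -- the bound functions
  set p : ℝ → ENNReal := fun x => ENNReal.ofReal (|x| ^ c) with hp
  set q : ℝ → ENNReal := fun t => ENNReal.ofReal (4 ^ α * (1 + t) ^ (-α)) with hq
  set K : ℝ → ℝ → ENNReal := fun u t => if 0 < t then q t * p (u + t) * p u else 0 with hK
  set B : ENNReal := ∫⁻ v : ℝ, ENNReal.ofReal (|v + 1| ^ c * |v| ^ c) with hB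
  have hBlt : B < ⊤ := aux_lint_lt_top (aux_B_integrable hc1 hc2)
  have mp : Measurable p := (measurable_abs.pow_const c).ennreal_ofReal
  have mq : Measurable q :=
    (((measurable_const.add measurable_id).pow_const (-α)).const_mul _).ennreal_ofReal
  -- Step 1: bound the inner integral and translate
  have step1 : ∀ u : ℝ, ∫⁻ s : ℝ, ENNReal.ofReal (‖h s u‖ ^ α) ≤ ∫⁻ t : ℝ, K u t := by
    intro u
    have mono : ∫⁻ s : ℝ, ENNReal.ofReal (‖h s u‖ ^ α)
        ≤ ∫⁻ s : ℝ, (if u < s then q (s - u) * p s * p u else 0) := by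
      refine lintegral_mono fun s => ?_
      by_cases hus : u < s
      · rw [if_pos hus]
        refine le_trans (ENNReal.ofReal_le_ofReal (key u s hus)) ?_
        rw [ENNReal.ofReal_mul (mul_nonneg (Real.rpow_nonneg (by norm_num : (0:ℝ) ≤ 4) α)
          (Real.rpow_nonneg (by linarith : (0:ℝ) ≤ 1 + (s - u)) (-α))), ENNReal.ofReal_mul
          (Real.rpow_nonneg (abs_nonneg _) _)]
        rw [hq, hp, mul_assoc]
      · rw [if_neg hus, hdef, if_neg hus]
        simp [Real.zero_rpow hα0.ne']
    refine mono.trans (le_of_eq ?_)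
    have := lintegral_add_right_eq_self (μ := volume)
      (fun s : ℝ => if u < s then q (s - u) * p s * p u else 0) u
    rw [← this]
    refine lintegral_congr fun t => ?_
    rw [hK]
    simp only [lt_add_iff_pos_left, add_sub_cancel_right]
    by_cases h0 : 0 < t
    · rw [if_pos h0, if_pos h0, add_comm t u]
    · rw [if_neg h0, if_neg h0]
  -- Step 2: swap
  have mK : Measurable (Function.uncurry K) := by
    have : Function.uncurry K = fun z : ℝ × ℝ =>
        if 0 < z.2 then q z.2 * p (z.1 + z.2) * p z.1 else 0 := rfl
    rw [this]
    refine Measurable.ite ?_ ?_ measurable_const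
    · exact measurableSet_lt measurable_const measurable_snd
    · exact ((mq.comp measurable_snd).mul (mp.comp (measurable_fst.add measurable_snd))).mul
        (mp.comp measurable_fst)
  have swap : ∫⁻ u : ℝ, ∫⁻ t : ℝ, K u t = ∫⁻ t : ℝ, ∫⁻ u : ℝ, K u t :=
    lintegral_lintegral_swap mK.aemeasurable
  -- Step 3: compute the u-integral for fixed t
  have step3 : ∀ t : ℝ, 0 < t →
      ∫⁻ u : ℝ, K u t = q t * (ENNReal.ofReal (t ^ (2 * c + 1)) * B) := by
    intro t ht0
    have e0 : ∀ u : ℝ, K u t = q t * (ENNReal.ofReal (|u + t| ^ c * |u| ^ c)) := by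
      intro u
      rw [hK]
      simp only [if_pos ht0]
      rw [hp, mul_assoc, ← ENNReal.ofReal_mul (Real.rpow_nonneg (abs_nonneg _) _)]
    have mf : Measurable fun u : ℝ => ENNReal.ofReal (|u + t| ^ c * |u| ^ c) :=
      ((((measurable_id.add_const t).abs.pow_const c).mul
        (measurable_abs.pow_const c))).ennreal_ofReal
    calc ∫⁻ u : ℝ, K u t
        = ∫⁻ u : ℝ, q t * ENNReal.ofReal (|u + t| ^ c * |u| ^ c) := lintegral_congr e0
      _ = q t * ∫⁻ u : ℝ, ENNReal.ofReal (|u + t| ^ c * |u| ^ c) := lintegral_const_mul _ mf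
      _ = q t * (ENNReal.ofReal (t ^ (2 * c + 1)) * B) := by
          congr 1
          -- substitution u = t * v
          have hmap : ∫⁻ u : ℝ, ENNReal.ofReal (|u + t| ^ c * |u| ^ c)
              = ENNReal.ofReal |t| * ∫⁻ v : ℝ,
                ENNReal.ofReal (|t * v + t| ^ c * |t * v| ^ c) := by
            conv_lhs => rw [← Real.smul_map_volume_mul_left ht0.ne']
            rw [lintegral_smul_measure, lintegral_map mf (measurable_const_mul t), smul_eq_mul]
          rw [hmap]
          have e1 : ∀ v : ℝ, ENNReal.ofReal (|t * v + t| ^ c * |t * v| ^ c)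
              = ENNReal.ofReal (t ^ (2 * c)) * ENNReal.ofReal (|v + 1| ^ c * |v| ^ c) := by
            intro v
            have ha : |t * v + t| = t * |v + 1| := by
              rw [show t * v + t = t * (v + 1) by ring, abs_mul, abs_of_pos ht0]
            have hb : |t * v| = t * |v| := by rw [abs_mul, abs_of_pos ht0]
            rw [ha, hb, Real.mul_rpow ht0.le (abs_nonneg _), Real.mul_rpow ht0.le (abs_nonneg _),
              ← ENNReal.ofReal_mul (by positivity)]
            congr 1
            rw [show (2:ℝ) * c = c + c by ring, Real.rpow_add ht0]
            ring
          have mg : Measurable (fun v : ℝ => ENNReal.ofReal (|v + 1| ^ c * |v| ^ c)) :=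
            ((((measurable_id.add_const 1).abs.pow_const c).mul
              (measurable_abs.pow_const c))).ennreal_ofReal
          rw [lintegral_congr e1, lintegral_const_mul _ mg, ← hB]
          rw [← mul_assoc, ← ENNReal.ofReal_mul (abs_nonneg _)]
          congr 2
          rw [abs_of_pos ht0, Real.rpow_add ht0, Real.rpow_one]
          ring
  -- Step 4: conclude
  have hzero : ∀ t : ℝ, ¬ 0 < t → ∫⁻ u : ℝ, K u t = 0 := by
    intro t ht
    have : ∀ u : ℝ, K u t = 0 := fun u => by rw [hK]; simp [ht]
    simp [this]
  have final : ∫⁻ t : ℝ, ∫⁻ u : ℝ, K u t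
      = ∫⁻ t in Ioi (0:ℝ), q t * (ENNReal.ofReal (t ^ (2 * c + 1)) * B) := by
    rw [← lintegral_indicator measurableSet_Ioi]
    refine lintegral_congr fun t => ?_
    by_cases ht : 0 < t
    · rw [step3 t ht, indicator_of_mem (mem_Ioi.2 ht)]
    · rw [hzero t ht, indicator_of_notMem (fun hm => ht (mem_Ioi.1 hm))]
  have m2c : (-1:ℝ) < 2 * c + 1 := by linarith
  have m2c' : 2 * c + 1 - α < -1 := by
    have : 2 * c + 1 - α = α * (1 - 2 * H) - 1 := by rw [hca]; ring
    nlinarith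
  have hTint : IntegrableOn (fun t : ℝ => (1 + t) ^ (-α) * t ^ (2 * c + 1)) (Ioi 0) :=
    aux_T_integrable m2c hα0 m2c'
  have hTlt : ∫⁻ t in Ioi (0:ℝ), ENNReal.ofReal ((1 + t) ^ (-α) * t ^ (2 * c + 1)) < ⊤ :=
    aux_lint_lt_top hTint
  calc ∫⁻ u : ℝ, ∫⁻ s : ℝ, ENNReal.ofReal (‖h s u‖ ^ α)
      ≤ ∫⁻ u : ℝ, ∫⁻ t : ℝ, K u t := lintegral_mono step1
    _ = ∫⁻ t : ℝ, ∫⁻ u : ℝ, K u t := swap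
    _ = ∫⁻ t in Ioi (0:ℝ), q t * (ENNReal.ofReal (t ^ (2 * c + 1)) * B) := final
    _ = ∫⁻ t in Ioi (0:ℝ), ENNReal.ofReal (4 ^ α) *
          (ENNReal.ofReal ((1 + t) ^ (-α) * t ^ (2 * c + 1)) * B) := by
        refine setLIntegral_congr_fun measurableSet_Ioi (fun t ht => ?_)
        have ht0 : (0:ℝ) < t := ht
        simp only [hq]
        rw [ENNReal.ofReal_mul (Real.rpow_nonneg (by norm_num : (0:ℝ) ≤ 4) α),
          ENNReal.ofReal_mul (Real.rpow_nonneg (by linarith : (0:ℝ) ≤ 1 + t) (-α))]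
        ring
    _ = ENNReal.ofReal (4 ^ α) *
          ((∫⁻ t in Ioi (0:ℝ), ENNReal.ofReal ((1 + t) ^ (-α) * t ^ (2 * c + 1))) * B) := by
        have mT : Measurable (fun t : ℝ => ENNReal.ofReal ((1 + t) ^ (-α) * t ^ (2 * c + 1))) :=
          (((measurable_const.add measurable_id).pow_const (-α)).mul
            (measurable_id.pow_const _)).ennreal_ofReal
        rw [lintegral_const_mul _ (mT.mul_const B), lintegral_mul_const _ mT]
    _ < ⊤ := by
        refine ENNReal.mul_lt_top ENNReal.ofReal_lt_top (ENNReal.mul_lt_top hTlt hBlt)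
end

section
/- Let α ∈ (0,2), H ∈ (1/2,1) and ρ > 1/α, set γ = 1 − H − 1/α, define h(s,u) = ((1 − exp(i(s−u)))/(i(s−u))) · |s·u|^γ for u < s and h(s,u) = 0 for u ≥ s, and define ψ(s) = c·( |s|^{−ρ} 1_{{|s|>1}}(s) + 1_{{|s|≤1}}(s) ) where c > 0 is chosen so that ∫_ℝ ψ(s)^α ds = 1. Then for every ε > 0 there exists a constant C > 0 such that for all s, u ≠ 0 with s ≠ u: log_+( ‖h(s,u)‖ / (ψ(s) ψ(u)) ) ≤ C · ( |s|^ε + |s|^{−ε} ) · ( |u|^ε + |u|^{−ε} ). -/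
open MeasureTheory Set

lemma aux_two_le (t ε : ℝ) (ht : 0 < t) (hε : 0 < ε) :
    2 ≤ t ^ ε + t ^ (-ε) := by
  have ha : 0 < t ^ ε := Real.rpow_pos_of_pos ht ε
  have hb : 0 < t ^ (-ε) := Real.rpow_pos_of_pos ht (-ε)
  have h1 : t ^ ε * t ^ (-ε) = 1 := by
    rw [← Real.rpow_add ht]; simp
  nlinarith [mul_nonneg (sq_nonneg (t ^ ε - 1)) hb.le]

lemma aux_abs_log (t ε : ℝ) (ht : 0 < t) (hε : 0 < ε) :
    |Real.log t| ≤ (t ^ ε + t ^ (-ε)) / ε := by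
  have ha : 0 < t ^ ε := Real.rpow_pos_of_pos ht ε
  have hb : 0 < t ^ (-ε) := Real.rpow_pos_of_pos ht (-ε)
  have key1 : ε * Real.log t ≤ t ^ ε - 1 := by
    have := Real.log_le_sub_one_of_pos ha
    rwa [Real.log_rpow ht] at this
  have key2 : (-ε) * Real.log t ≤ t ^ (-ε) - 1 := by
    have := Real.log_le_sub_one_of_pos hb
    rwa [Real.log_rpow ht] at this
  rw [abs_le]
  constructor
  · rw [neg_le, le_div_iff₀ hε] at *
    nlinarith
  · rw [le_div_iff₀ hε]
    nlinarith

lemma aux_exp_factor (θ : ℝ) (hθ : 0 < θ) :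
    ‖(1 : ℂ) - Complex.exp (Complex.I * (θ : ℂ))‖ ≤ 2 * θ := by
  have hre : (Complex.I * (θ : ℂ)).re = 0 := by simp
  have habs : ‖Complex.I * (θ : ℂ)‖ = θ := by
    rw [norm_mul, Complex.norm_I, one_mul, Complex.norm_real]
    exact abs_of_pos hθ
  rw [norm_sub_rev]
  rcases le_or_gt θ 1 with h1 | h1
  · have := Complex.norm_exp_sub_one_le (x := Complex.I * (θ : ℂ))
      (by rw [habs]; exact h1)
    rw [habs] at this
    exact this
  · have h2 : ‖Complex.exp (Complex.I * (θ : ℂ))‖ = 1 := by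
      rw [Complex.norm_exp, hre, Real.exp_zero]
    calc ‖Complex.exp (Complex.I * (θ : ℂ)) - 1‖
        ≤ ‖Complex.exp (Complex.I * (θ : ℂ))‖ + ‖(1:ℂ)‖ := norm_sub_le _ _
      _ = 2 := by rw [h2, norm_one]; norm_num
      _ ≤ 2 * θ := by nlinarith

lemma aux_final (K K' As Au ε Ls Lu : ℝ) (hε : 0 < ε) (hK' : 0 ≤ K')
    (hLs : Ls ≤ As / ε) (hLu : Lu ≤ Au / ε)
    (hAs : 2 ≤ As) (hAu : 2 ≤ Au) :
    K + K' * (Ls + Lu) ≤ (|K| / 4 + K' / ε + 1) * As * Au := by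
  have e5 : 4 ≤ As * Au := by nlinarith
  have e1 : K' * Ls ≤ K' * (As / ε) := mul_le_mul_of_nonneg_left hLs hK'
  have e2 : K' * Lu ≤ K' * (Au / ε) := mul_le_mul_of_nonneg_left hLu hK'
  have e6 : K' * (As / ε) * 2 ≤ K' * (As / ε) * Au :=
    mul_le_mul_of_nonneg_left hAu (by positivity)
  have e7 : K' * (Au / ε) * 2 ≤ K' * (Au / ε) * As :=
    mul_le_mul_of_nonneg_left hAs (by positivity)
  have h10 : K ≤ |K| / 4 * (As * Au) := by
    have := mul_le_mul_of_nonneg_left e5 (show (0:ℝ) ≤ |K| / 4 by positivity)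
    linarith [le_abs_self K]
  have heq : K' * (As / ε) * Au + K' * (Au / ε) * As = 2 * (K' / ε * (As * Au)) := by
    field_simp; ring
  have h11 : K' * (As / ε) + K' * (Au / ε) ≤ K' / ε * (As * Au) := by linarith
  have hring : (|K| / 4 + K' / ε + 1) * As * Au =
      |K| / 4 * (As * Au) + K' / ε * (As * Au) + As * Au := by ring
  rw [hring]
  nlinarith

/-- Logarithmic estimate: for every `ε > 0` there is `C > 0` with
`log₊(‖h(s,u)‖ / (ψ(s)ψ(u))) ≤ C (|s|^ε + |s|^{-ε})(|u|^ε + |u|^{-ε})`, where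
`log₊ x = max (log x) 0`. -/
theorem log_plus_kernel_bound (α H ρ : ℝ) (hα : α ∈ Ioo (0 : ℝ) 2)
    (hH : H ∈ Ioo (1 / 2 : ℝ) 1) (hρ : 1 / α < ρ)
    (γ : ℝ) (hγ : γ = 1 - H - 1 / α)
    (h : ℝ → ℝ → ℂ)
    (hdef : ∀ s u : ℝ, h s u = if u < s then
        (1 - Complex.exp (Complex.I * ((s : ℂ) - (u : ℂ)))) / (Complex.I * ((s : ℂ) - (u : ℂ))) *
          ((|s| ^ γ * |u| ^ γ : ℝ) : ℂ)
      else 0)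
    (c : ℝ) (hc : 0 < c)
    (ψ : ℝ → ℝ)
    (hψ : ∀ s : ℝ, ψ s = c * (|s| ^ (-ρ) * {x : ℝ | 1 < |x|}.indicator 1 s +
      {x : ℝ | |x| ≤ 1}.indicator 1 s))
    (hnorm : ∫ s : ℝ, ψ s ^ α = 1) :
    ∀ ε : ℝ, 0 < ε → ∃ C : ℝ, 0 < C ∧ ∀ s u : ℝ, s ≠ 0 → u ≠ 0 → s ≠ u →
      max (Real.log (‖h s u‖ / (ψ s * ψ u))) 0 ≤
        C * (|s| ^ ε + |s| ^ (-ε)) * (|u| ^ ε + |u| ^ (-ε)) := by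
  have hρ0 : 0 < ρ := lt_trans (div_pos one_pos hα.1) hρ
  -- positivity and log bound for ψ
  have hψb : ∀ t : ℝ, t ≠ 0 →
      0 < ψ t ∧ -Real.log (ψ t) ≤ |Real.log c| + ρ * |Real.log (|t|)| := by
    intro t ht
    have htpos : 0 < |t| := abs_pos.mpr ht
    rcases le_or_gt |t| 1 with h1 | h1
    · have hval : ψ t = c := by
        rw [hψ]
        rw [Set.indicator_of_notMem (by simp [not_lt.mpr h1]),
          Set.indicator_of_mem (by simpa using h1)]
        simp
      refine ⟨hval ▸ hc, ?_⟩
      rw [hval]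
      have h2 : 0 ≤ ρ * |Real.log (|t|)| := mul_nonneg hρ0.le (abs_nonneg _)
      linarith [neg_abs_le (Real.log c), le_abs_self (Real.log c)]
    · have hval : ψ t = c * |t| ^ (-ρ) := by
        rw [hψ]
        rw [Set.indicator_of_mem (by simpa using h1),
          Set.indicator_of_notMem (by simp [not_le.mpr h1])]
        simp
      have hp : 0 < c * |t| ^ (-ρ) := by positivity
      refine ⟨hval ▸ hp, ?_⟩
      rw [hval, Real.log_mul hc.ne' (by positivity), Real.log_rpow htpos]
      have : ρ * Real.log |t| ≤ ρ * |Real.log (|t|)| :=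
        mul_le_mul_of_nonneg_left (le_abs_self _) hρ0.le
      linarith [neg_abs_le (Real.log c), le_abs_self (Real.log c)]
  intro ε hε
  set K : ℝ := Real.log 2 + 2 * |Real.log c| with hK
  set K' : ℝ := |γ| + ρ with hK'
  have hK'0 : 0 ≤ K' := by positivity
  have hC0 : 0 < |K| / 4 + K' / ε + 1 := by
    have h1 : 0 ≤ |K| / 4 := by positivity
    have h2 : 0 ≤ K' / ε := div_nonneg hK'0 hε.le
    linarith
  refine ⟨|K| / 4 + K' / ε + 1, hC0, ?_⟩
  intro s u hs hu hsu
  have hspos : 0 < |s| := abs_pos.mpr hs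
  have hupos : 0 < |u| := abs_pos.mpr hu
  set As : ℝ := |s| ^ ε + |s| ^ (-ε) with hAs
  set Au : ℝ := |u| ^ ε + |u| ^ (-ε) with hAu
  have hAs2 : 2 ≤ As := aux_two_le _ _ hspos hε
  have hAu2 : 2 ≤ Au := aux_two_le _ _ hupos hε
  have hLs : |Real.log (|s|)| ≤ As / ε := aux_abs_log _ _ hspos hε
  have hLu : |Real.log (|u|)| ≤ Au / ε := aux_abs_log _ _ hupos hε
  obtain ⟨hψs, hψslog⟩ := hψb s hs
  obtain ⟨hψu, hψulog⟩ := hψb u hu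
  have hRHS0 : 0 ≤ (|K| / 4 + K' / ε + 1) * As * Au := by
    apply mul_nonneg (mul_nonneg hC0.le (by linarith)) (by linarith)
  rcases eq_or_lt_of_le (norm_nonneg (h s u)) with hzero | hpos
  · rw [← hzero, zero_div, Real.log_zero, max_self]
    exact hRHS0
  · -- h s u ≠ 0, hence u < s
    have hus : u < s := by
      by_contra hcon
      rw [hdef, if_neg hcon, norm_zero] at hpos
      exact lt_irrefl 0 hpos
    have hθ : 0 < s - u := sub_pos.mpr hus
    -- norm bound
    have hr : (0:ℝ) < |s| ^ γ * |u| ^ γ := by positivity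
    have hnh : ‖h s u‖ ≤ 2 * (|s| ^ γ * |u| ^ γ) := by
      rw [hdef, if_pos hus]
      have hcoe : ((s : ℂ) - (u : ℂ)) = ((s - u : ℝ) : ℂ) := by push_cast; ring
      rw [norm_mul, Complex.norm_real, norm_div, hcoe]
      have habs : ‖Complex.I * ((s - u : ℝ) : ℂ)‖ = s - u := by
        rw [norm_mul, Complex.norm_I, one_mul, Complex.norm_real]
        exact abs_of_pos hθ
      rw [habs, Real.norm_eq_abs, abs_of_pos hr]
      have hfac : ‖(1:ℂ) - Complex.exp (Complex.I * ((s - u : ℝ) : ℂ))‖ / (s - u) ≤ 2 := by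
        rw [div_le_iff₀ hθ]
        exact aux_exp_factor (s - u) hθ
      exact mul_le_mul_of_nonneg_right hfac hr.le |>.trans (le_of_eq rfl)
    -- log bound
    have hlogh : Real.log ‖h s u‖ ≤
        Real.log 2 + |γ| * |Real.log (|s|)| + |γ| * |Real.log (|u|)| := by
      have h1 : Real.log ‖h s u‖ ≤ Real.log (2 * (|s| ^ γ * |u| ^ γ)) :=
        Real.log_le_log hpos hnh
      rw [Real.log_mul (by norm_num) hr.ne', Real.log_mul (by positivity) (by positivity),
        Real.log_rpow hspos, Real.log_rpow hupos] at h1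
      have h2 : γ * Real.log |s| ≤ |γ| * |Real.log (|s|)| := by
        calc γ * Real.log |s| ≤ |γ * Real.log (|s|)| := le_abs_self _
          _ = |γ| * |Real.log (|s|)| := abs_mul _ _
      have h3 : γ * Real.log |u| ≤ |γ| * |Real.log (|u|)| := by
        calc γ * Real.log |u| ≤ |γ * Real.log (|u|)| := le_abs_self _
          _ = |γ| * |Real.log (|u|)| := abs_mul _ _
      linarith
    have hlogX : Real.log (‖h s u‖ / (ψ s * ψ u)) ≤
        K + K' * (|Real.log (|s|)| + |Real.log (|u|)|) := by
      rw [Real.log_div hpos.ne' (by positivity), Real.log_mul hψs.ne' hψu.ne']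
      have := mul_le_mul_of_nonneg_left hLs hK'0
      rw [hK, hK']
      nlinarith [abs_nonneg (Real.log |s|), abs_nonneg (Real.log |u|),
        mul_le_mul_of_nonneg_left (le_abs_self (Real.log |s|)) hρ0.le]
    -- final arithmetic
    have hfinal : K + K' * (|Real.log (|s|)| + |Real.log (|u|)|) ≤
        (|K| / 4 + K' / ε + 1) * As * Au :=
      aux_final K K' As Au ε _ _ hε hK'0 hLs hLu hAs2 hAu2
    rw [max_le_iff]
    exact ⟨hlogX.trans hfinal, hRHS0⟩
end

section
/- Let α ∈ (0,2) and H ∈ (1/2,1), set γ = 1 − H − 1/α, define r(s) = ((1 − exp(−is))/(is)) · |s|^γ for s ≠ 0, g_n(x) = (1 − exp(inx))/(1 − exp(ix)) for x ∉ 2πℤ, and h_n(s,u) = n^{1−2H} · g_n(s−u) · r(s) · conj(r(u)) for u < s (and 0 for u ≥ s). Then for every δ ∈ (0,1) there exists a constant C > 0 such that for all n ≥ 1 and all (s,u) with u < s, s, u ≠ 0, |s| < δn and |u| < δn: ‖n^{−2/α} · h_n(s/n, u/n)‖ ≤ C · |s·u|^γ · ( 1_{[s−1,s)}(u) + |s −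 u|^{−1} · 1_{(−∞, s−1)}(u) ). -/
open Set

lemma norm_one_sub_expI (t : ℝ) :
    ‖(1 : ℂ) - Complex.exp (Complex.I * t)‖ = 2 * |Real.sin (t / 2)| := by
  have h : Complex.I * (t : ℂ) = (t : ℂ) * Complex.I := mul_comm _ _
  rw [h, Complex.exp_mul_I]
  have hre : ((1 : ℂ) - (Complex.cos t + Complex.sin t * Complex.I)).re = 1 - Real.cos t := by
    simp [Complex.cos_ofReal_re, Complex.sin_ofReal_re]
  have him : ((1 : ℂ) - (Complex.cos t + Complex.sin t * Complex.I)).im = -Real.sin t := by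
    simp [Complex.cos_ofReal_im, Complex.sin_ofReal_im, Complex.sin_ofReal_re]
  rw [Complex.norm_def, Complex.normSq_apply, hre, him]
  have hs : Real.sin (t/2) ^ 2 + Real.cos (t/2) ^ 2 = 1 := Real.sin_sq_add_cos_sq _
  have hc : Real.cos t = 2 * Real.cos (t/2) ^ 2 - 1 := by
    have := Real.cos_two_mul (t/2); rw [← this]; ring_nf
  have key : (1 - Real.cos t) * (1 - Real.cos t) + (-Real.sin t) * (-Real.sin t)
      = (2 * |Real.sin (t/2)|) ^ 2 := by
    have h1 : Real.sin t ^ 2 + Real.cos t ^ 2 = 1 := Real.sin_sq_add_cos_sq _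
    have h2 : |Real.sin (t/2)| ^ 2 = Real.sin (t/2) ^ 2 := sq_abs _
    nlinarith [h1, h2, hc, hs]
  rw [key]
  exact Real.sqrt_sq (by positivity)

lemma norm_r_le (γ : ℝ) (r : ℝ → ℂ)
    (hr : ∀ s : ℝ, s ≠ 0 → r s =
      (1 - Complex.exp (-(Complex.I * (s : ℂ)))) / (Complex.I * (s : ℂ)) * ((|s| ^ γ : ℝ) : ℂ))
    (x : ℝ) (hx : x ≠ 0) : ‖r x‖ ≤ |x| ^ γ := by
  rw [hr x hx, norm_mul, norm_div]
  have h1 : -(Complex.I * (x : ℂ)) = Complex.I * ((-x : ℝ) : ℂ) := by push_cast; ring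
  have h2 : ‖(1 : ℂ) - Complex.exp (-(Complex.I * (x : ℂ)))‖ ≤ |x| := by
    rw [h1, norm_one_sub_expI]
    have := Real.abs_sin_le_abs (x := -x / 2)
    calc 2 * |Real.sin (-x/2)| ≤ 2 * |(-x)/2| := by nlinarith [abs_nonneg (-x/2)]
      _ = |x| := by rw [abs_div, abs_neg, abs_two]; ring
  have h3 : ‖Complex.I * (x : ℂ)‖ = |x| := by
    simp [norm_mul, Complex.norm_real, Real.norm_eq_abs]
  have h4 : ‖((|x| ^ γ : ℝ) : ℂ)‖ = |x| ^ γ := by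
    rw [Complex.norm_real, Real.norm_eq_abs, abs_of_nonneg (Real.rpow_nonneg (abs_nonneg x) _)]
  rw [h3, h4]
  have hx0 : 0 < |x| := abs_pos.mpr hx
  have : ‖(1 : ℂ) - Complex.exp (-(Complex.I * (x : ℂ)))‖ / |x| ≤ 1 :=
    (div_le_one hx0).mpr h2
  calc ‖(1 : ℂ) - Complex.exp (-(Complex.I * (x : ℂ)))‖ / |x| * (|x| ^ γ)
      ≤ 1 * |x| ^ γ := by
        apply mul_le_mul_of_nonneg_right this (Real.rpow_nonneg (abs_nonneg x) _)
    _ = |x| ^ γ := one_mul _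

set_option maxHeartbeats 1000000 in
/-- Uniform domination of the rescaled prelimit kernels on `(-δn, δn)²`: for `δ ∈ (0,1)`
there is `C > 0` such that, for all `n ≥ 1` and `u < s` with `s,u ≠ 0`, `|s| < δn`, `|u| < δn`,
`‖n^{-2/α} h_n(s/n, u/n)‖ ≤ C |s|^γ |u|^γ (1_{[s-1,s)}(u) + |s-u|^{-1} 1_{(-∞,s-1)}(u))`. -/
theorem prelimit_kernel_domination (α H : ℝ) (hα : α ∈ Ioo (0 : ℝ) 2)
    (hH : H ∈ Ioo (1 / 2 : ℝ) 1)
    (γ : ℝ) (hγ : γ = 1 - H - 1 / α)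
    (r : ℝ → ℂ)
    (hr : ∀ s : ℝ, s ≠ 0 → r s =
      (1 - Complex.exp (-(Complex.I * (s : ℂ)))) / (Complex.I * (s : ℂ)) * ((|s| ^ γ : ℝ) : ℂ))
    (g : ℕ → ℝ → ℂ)
    (hg : ∀ (n : ℕ) (x : ℝ), (∀ m : ℤ, x ≠ 2 * Real.pi * m) →
      g n x = (1 - Complex.exp (Complex.I * (n : ℂ) * (x : ℂ))) /
        (1 - Complex.exp (Complex.I * (x : ℂ))))
    (hn : ℕ → ℝ → ℝ → ℂ)
    (hhn : ∀ (n : ℕ) (s u : ℝ), hn n s u = if u < s then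
        (((n : ℝ) ^ (1 - 2 * H) : ℝ) : ℂ) * g n (s - u) * r s * (starRingEnd ℂ) (r u)
      else 0) :
    ∀ δ : ℝ, δ ∈ Ioo (0 : ℝ) 1 → ∃ C : ℝ, 0 < C ∧
      ∀ (n : ℕ) (s u : ℝ), 1 ≤ n → u < s → s ≠ 0 → u ≠ 0 →
        |s| < δ * n → |u| < δ * n →
        ‖(((n : ℝ) ^ (-2 / α) : ℝ) : ℂ) * hn n (s / n) (u / n)‖ ≤
          C * (|s| ^ γ * |u| ^ γ) *
            ((Ico (s - 1) s).indicator 1 u + |s - u| ^ (-1 : ℝ) * (Iio (s - 1)).indicator 1 u) := by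
  intro δ hδ
  refine ⟨Real.pi, Real.pi_pos, ?_⟩
  intro n s u hn1 hus hs hu hsδ huδ
  have hN : (1 : ℝ) ≤ (n : ℝ) := by exact_mod_cast hn1
  have hN0 : (0 : ℝ) < (n : ℝ) := by linarith
  have hNne : (n : ℝ) ≠ 0 := ne_of_gt hN0
  have hsu0 : (0 : ℝ) < s - u := by linarith
  set x := (s - u) / (n : ℝ) with hxdef
  have hx0 : 0 < x := div_pos hsu0 hN0
  have hx2 : x < 2 := by
    have h1 : s ≤ |s| := le_abs_self s
    have h2 : -u ≤ |u| := neg_le_abs u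
    have : s - u < 2 * (n : ℝ) := by
      have : s - u < δ * n + δ * n := by linarith
      have hδ1 : δ < 1 := hδ.2
      nlinarith [hδ.1, hN0]
    rw [hxdef, div_lt_iff₀ hN0]; linarith
  have hxpi : x / 2 < Real.pi / 2 := by
    have := Real.pi_gt_three; linarith
  have hxne : ∀ m : ℤ, x ≠ 2 * Real.pi * m := by
    intro m hm
    rcases le_or_gt m 0 with hm0 | hm0
    · have : (2 : ℝ) * Real.pi * m ≤ 0 := by
        have : (m : ℝ) ≤ 0 := by exact_mod_cast hm0
        nlinarith [Real.pi_pos]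
      linarith [hm ▸ hx0]
    · have hm1 : (1 : ℝ) ≤ (m : ℝ) := by exact_mod_cast hm0
      have : (2 : ℝ) * Real.pi ≤ 2 * Real.pi * m := by nlinarith [Real.pi_pos]
      have := Real.pi_gt_three
      rw [hm] at hx2; nlinarith
  -- decompose the norm
  have husn : u / (n : ℝ) < s / (n : ℝ) := by
    exact div_lt_div_of_pos_right hus hN0
  have hxsub : s / (n : ℝ) - u / (n : ℝ) = x := by rw [hxdef]; ring
  -- sin lower bound on the denominator
  have hsinpos : 0 < Real.sin (x / 2) :=
    Real.sin_pos_of_pos_of_lt_pi (by linarith) (by nlinarith [Real.pi_gt_three])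
  have hsinlow : x / Real.pi ≤ Real.sin (x / 2) := by
    have := Real.mul_le_sin (x := x / 2) (by linarith) (le_of_lt hxpi)
    calc x / Real.pi = 2 / Real.pi * (x / 2) := by
          field_simp
      _ ≤ Real.sin (x / 2) := this
  -- norm of g
  have hgnorm : ‖g n x‖ = |Real.sin ((s - u) / 2)| / Real.sin (x / 2) := by
    rw [hg n x hxne]
    have hnx : (n : ℝ) * x = s - u := by rw [hxdef]; field_simp
    have hnum : Complex.I * (n : ℂ) * (x : ℂ) = Complex.I * (((s - u) : ℝ) : ℂ) := by
      rw [← hnx]; push_cast; ring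
    rw [norm_div, hnum, norm_one_sub_expI, norm_one_sub_expI,
      abs_of_pos hsinpos]
    rw [mul_div_mul_left _ _ (two_ne_zero)]
  have hGnonneg : (0:ℝ) ≤ ‖g n x‖ := norm_nonneg _
  -- norm of r factors
  have hsn : s / (n : ℝ) ≠ 0 := div_ne_zero hs hNne
  have hun : u / (n : ℝ) ≠ 0 := div_ne_zero hu hNne
  have hrs : ‖r (s / n)‖ ≤ |s| ^ γ * (n : ℝ) ^ (-γ) := by
    have := norm_r_le γ r hr (s / n) hsn
    have habs : |s / (n:ℝ)| ^ γ = |s| ^ γ * (n : ℝ) ^ (-γ) := by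
      rw [abs_div, abs_of_pos hN0, Real.div_rpow (abs_nonneg s) (le_of_lt hN0),
        Real.rpow_neg (le_of_lt hN0), div_eq_mul_inv]
    linarith [habs ▸ this]
  have hru : ‖r (u / n)‖ ≤ |u| ^ γ * (n : ℝ) ^ (-γ) := by
    have := norm_r_le γ r hr (u / n) hun
    have habs : |u / (n:ℝ)| ^ γ = |u| ^ γ * (n : ℝ) ^ (-γ) := by
      rw [abs_div, abs_of_pos hN0, Real.div_rpow (abs_nonneg u) (le_of_lt hN0),
        Real.rpow_neg (le_of_lt hN0), div_eq_mul_inv]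
    linarith [habs ▸ this]
  -- full norm decomposition
  have hnorm : ‖(((n : ℝ) ^ (-2 / α) : ℝ) : ℂ) * hn n (s / n) (u / n)‖ =
      (n : ℝ) ^ (-2 / α) * ((n : ℝ) ^ (1 - 2 * H) * ‖g n x‖ * ‖r (s / n)‖ * ‖r (u / n)‖) := by
    rw [hhn, if_pos husn, hxsub]
    simp only [norm_mul, Complex.norm_real, Real.norm_eq_abs, RCLike.norm_conj]
    rw [abs_of_nonneg (Real.rpow_nonneg (le_of_lt hN0) (-2/α)),
      abs_of_nonneg (Real.rpow_nonneg (le_of_lt hN0) (1-2*H))]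
  -- the power identity
  have hαne : α ≠ 0 := ne_of_gt hα.1
  have hexp : -2 / α + ((1 - 2 * H) + 1 + -γ + -γ) = 0 := by
    rw [hγ]; field_simp; ring
  have hpow : (n : ℝ) ^ (-2 / α) * ((n : ℝ) ^ (1 - 2 * H) * (n : ℝ) * (n : ℝ) ^ (-γ)
      * (n : ℝ) ^ (-γ)) = 1 := by
    have h1 : ((n:ℝ)) = (n:ℝ) ^ (1:ℝ) := (Real.rpow_one _).symm
    rw [show (n : ℝ) ^ (-2 / α) * ((n : ℝ) ^ (1 - 2 * H) * (n : ℝ) * (n : ℝ) ^ (-γ)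
        * (n : ℝ) ^ (-γ)) = (n : ℝ) ^ (-2 / α) * (n : ℝ) ^ (1 - 2 * H) * (n : ℝ) ^ (1:ℝ)
        * (n : ℝ) ^ (-γ) * (n : ℝ) ^ (-γ) from by rw [← h1]; ring]
    rw [← Real.rpow_add hN0, ← Real.rpow_add hN0, ← Real.rpow_add hN0, ← Real.rpow_add hN0]
    rw [show -2 / α + (1 - 2 * H) + 1 + -γ + -γ = 0 from by linarith [hexp], Real.rpow_zero]
  have hP : (0:ℝ) ≤ (n : ℝ) ^ (-2 / α) := Real.rpow_nonneg (le_of_lt hN0) _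
  have hQ : (0:ℝ) ≤ (n : ℝ) ^ (1 - 2 * H) := Real.rpow_nonneg (le_of_lt hN0) _
  have hNg : (0:ℝ) ≤ (n : ℝ) ^ (-γ) := Real.rpow_nonneg (le_of_lt hN0) _
  have hsγ : (0:ℝ) ≤ |s| ^ γ := Real.rpow_nonneg (abs_nonneg s) _
  have huγ : (0:ℝ) ≤ |u| ^ γ := Real.rpow_nonneg (abs_nonneg u) _
  rw [hnorm]
  rcases le_or_gt (s - 1) u with h1 | h1
  · -- case u ∈ [s-1, s)
    have hind1 : (Ico (s - 1) s).indicator (1 : ℝ → ℝ) u = 1 := by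
      rw [indicator_of_mem (mem_Ico.mpr ⟨h1, hus⟩)]; rfl
    have hind2 : (Iio (s - 1)).indicator (1 : ℝ → ℝ) u = 0 :=
      indicator_of_notMem (by simpa using not_lt.mpr h1) 1
    rw [hind1, hind2]
    have hG : ‖g n x‖ ≤ Real.pi * (n : ℝ) / 2 := by
      rw [hgnorm]
      have hnumle : |Real.sin ((s - u) / 2)| ≤ (s - u) / 2 := by
        have := Real.abs_sin_le_abs (x := (s - u) / 2)
        rwa [abs_of_pos (by linarith : (0:ℝ) < (s-u)/2)] at this
      have hxπ : 0 < x / Real.pi := div_pos hx0 Real.pi_pos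
      calc |Real.sin ((s - u) / 2)| / Real.sin (x / 2)
          ≤ ((s - u) / 2) / (x / Real.pi) :=
            div_le_div₀ (by linarith) hnumle hxπ hsinlow
        _ = Real.pi * (n : ℝ) / 2 := by
            rw [hxdef]; field_simp
    calc (n : ℝ) ^ (-2 / α) * ((n : ℝ) ^ (1 - 2 * H) * ‖g n x‖ * ‖r (s / n)‖ * ‖r (u / n)‖)
        ≤ (n : ℝ) ^ (-2 / α) * ((n : ℝ) ^ (1 - 2 * H) * (Real.pi * (n : ℝ) / 2)
            * (|s| ^ γ * (n : ℝ) ^ (-γ)) * (|u| ^ γ * (n : ℝ) ^ (-γ))) := by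
          gcongr
        _ = (Real.pi / 2) * ((n : ℝ) ^ (-2 / α) * ((n : ℝ) ^ (1 - 2 * H) * (n : ℝ)
            * (n : ℝ) ^ (-γ) * (n : ℝ) ^ (-γ))) * (|s| ^ γ * |u| ^ γ) := by ring
        _ = (Real.pi / 2) * (|s| ^ γ * |u| ^ γ) := by rw [hpow]; ring
        _ ≤ Real.pi * (|s| ^ γ * |u| ^ γ) * (1 + |s - u| ^ (-1:ℝ) * 0) := by
          have hπ := Real.pi_pos
          have : (0:ℝ) ≤ |s| ^ γ * |u| ^ γ := mul_nonneg hsγ huγ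
          nlinarith
  · -- case u < s - 1
    have hind1 : (Ico (s - 1) s).indicator (1 : ℝ → ℝ) u = 0 :=
      indicator_of_notMem (by intro hm; exact absurd hm.1 (not_le.mpr h1)) 1
    have hind2 : (Iio (s - 1)).indicator (1 : ℝ → ℝ) u = 1 := by
      rw [indicator_of_mem (mem_Iio.mpr h1)]; rfl
    rw [hind1, hind2]
    have habs_su : |s - u| = s - u := abs_of_pos hsu0
    have hG : ‖g n x‖ ≤ Real.pi * (n : ℝ) / (s - u) := by
      rw [hgnorm]
      have hnumle : |Real.sin ((s - u) / 2)| ≤ 1 := Real.abs_sin_le_one _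
      have hxπ : 0 < x / Real.pi := div_pos hx0 Real.pi_pos
      calc |Real.sin ((s - u) / 2)| / Real.sin (x / 2)
          ≤ 1 / (x / Real.pi) := div_le_div₀ (by norm_num) hnumle hxπ hsinlow
        _ = Real.pi * (n : ℝ) / (s - u) := by
            rw [hxdef]; field_simp
    calc (n : ℝ) ^ (-2 / α) * ((n : ℝ) ^ (1 - 2 * H) * ‖g n x‖ * ‖r (s / n)‖ * ‖r (u / n)‖)
        ≤ (n : ℝ) ^ (-2 / α) * ((n : ℝ) ^ (1 - 2 * H) * (Real.pi * (n : ℝ) / (s - u))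
            * (|s| ^ γ * (n : ℝ) ^ (-γ)) * (|u| ^ γ * (n : ℝ) ^ (-γ))) := by
          gcongr
        _ = Real.pi * ((n : ℝ) ^ (-2 / α) * ((n : ℝ) ^ (1 - 2 * H) * (n : ℝ)
            * (n : ℝ) ^ (-γ) * (n : ℝ) ^ (-γ))) * (|s| ^ γ * |u| ^ γ) * (s - u)⁻¹ := by
          field_simp
        _ = Real.pi * (|s| ^ γ * |u| ^ γ) * (s - u)⁻¹ := by rw [hpow]; ring
        _ ≤ Real.pi * (|s| ^ γ * |u| ^ γ) * (0 + |s - u| ^ (-1:ℝ) * 1) := by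
          rw [habs_su, Real.rpow_neg_one]; ring_nf; exact le_refl _
end

section
/- Let α ∈ (0,2) and H ∈ (1/2,1) satisfy α(1−H) < 1/2, set γ = 1 − H − 1/α, and let a ∈ (0,1) with aα < 1 and δ ∈ (0,1). Then ∫∫_{{|s| > δ, |u| > δ, u < s, s−u ∉ 2πℤ}} |s|^{α(γ−1)} |u|^{α(γ−1)} · dist(s − u, 2πℤ)^{−aα} ds du < ∞. -/
open MeasureTheory Set

open scoped ENNReal NNReal

namespace DomAux

open Metric Real

noncomputable section

/-- The lattice `2πℤ` as a set. -/
def L : Set ℝ := Set.range fun m : ℤ => 2 * Real.pi * (m : ℝ)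

lemma L_nonempty : L.Nonempty := ⟨0, 0, by simp⟩

lemma infDist_L_add (x : ℝ) (k : ℤ) : infDist (x + 2 * π * k) L = infDist x L := by
  have hiso : Isometry (fun y : ℝ => y + 2 * π * k) :=
    Isometry.of_dist_eq fun a b => dist_add_right a b _
  have himg : (fun y : ℝ => y + 2 * π * k) '' L = L := by
    ext z
    simp only [L, mem_image, mem_range]
    constructor
    · rintro ⟨y, ⟨m, rfl⟩, rfl⟩
      exact ⟨m + k, by push_cast; ring⟩
    · rintro ⟨m, rfl⟩
      exact ⟨2 * π * ((m : ℝ) - (k : ℝ)), ⟨m - k, by push_cast; ring⟩, by ring⟩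
  calc infDist (x + 2 * π * k) L
      = infDist ((fun y : ℝ => y + 2 * π * k) x) ((fun y : ℝ => y + 2 * π * k) '' L) := by
        rw [himg]
    _ = infDist x L := Metric.infDist_image hiso

lemma infDist_L_abs {x : ℝ} (hx : |x| ≤ π) : infDist x L = |x| := by
  refine le_antisymm ?_ ?_
  · have h0 : (0 : ℝ) ∈ L := ⟨0, by simp⟩
    simpa [Real.dist_eq] using infDist_le_dist_of_mem h0
  · have : Nonempty L := L_nonempty.to_subtype
    rw [Metric.infDist_eq_iInf]
    refine le_ciInf ?_
    rintro ⟨y, m, rfl⟩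
    simp only [Real.dist_eq]
    rcases eq_or_ne m 0 with rfl | hm
    · simp
    · have h1 : (1 : ℝ) ≤ |(m : ℝ)| := by exact_mod_cast Int.one_le_abs hm
      have h2 : |2 * π * (m : ℝ)| = 2 * π * |(m : ℝ)| := by
        rw [abs_mul, abs_of_pos Real.two_pi_pos]
      have h3 : |2 * π * (m : ℝ)| - |x| ≤ |x - 2 * π * (m : ℝ)| := by
        rw [abs_sub_comm]; exact abs_sub_abs_le_abs_sub _ _
      rw [h2] at h3
      have h4 : 2 * π * 1 ≤ 2 * π * |(m : ℝ)| :=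
        mul_le_mul_of_nonneg_left h1 Real.two_pi_pos.le
      have hπ := Real.pi_pos
      linarith

/-- The periodic singular factor. -/
def G (c : ℝ) : ℝ → ℝ≥0∞ := fun x => ENNReal.ofReal (infDist x L ^ (-c))

lemma G_meas (c : ℝ) : Measurable (G c) := by unfold G L; fun_prop

lemma G_periodic (c : ℝ) (x : ℝ) (k : ℤ) : G c (x + 2 * π * k) = G c x := by
  simp only [G, infDist_L_add]

lemma lintegral_G_Ioc (c u t : ℝ) :
    ∫⁻ x in Ioc t (t + 2 * π), G c (x - u) = ∫⁻ x in Ioc (-π) π, G c x := by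
  have h2π : (0 : ℝ) < 2 * π := Real.two_pi_pos
  have hinv : ∀ (g : AddSubgroup.zmultiples (2 * π)) (x : ℝ),
      (fun y => G c (y - u)) (g +ᵥ x) = (fun y => G c (y - u)) x := by
    intro g x
    obtain ⟨k, hk⟩ := (AddSubgroup.mem_zmultiples_iff).1 g.2
    show G c ((g : ℝ) + x - u) = G c (x - u)
    have hx : (g : ℝ) + x - u = (x - u) + 2 * π * k := by
      rw [← hk, zsmul_eq_mul]; ring
    rw [hx, G_periodic]
  have h1 := (isAddFundamentalDomain_Ioc h2π t).setLIntegral_eq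
      (isAddFundamentalDomain_Ioc h2π (u - π)) (fun y => G c (y - u)) hinv
  rw [h1]
  have h2 : u - π + 2 * π = u + π := by ring
  rw [h2]
  rw [← lintegral_indicator measurableSet_Ioc, ← lintegral_indicator measurableSet_Ioc]
  rw [← lintegral_add_right_eq_self
      (fun y => (Ioc (u - π) (u + π)).indicator (fun y => G c (y - u)) y) u]
  congr 1
  funext x
  by_cases hx : x ∈ Ioc (-π) π
  · rw [indicator_of_mem hx, indicator_of_mem
      (by simp only [mem_Ioc] at hx ⊢; constructor <;> linarith [hx.1, hx.2])]
    simp only [add_sub_cancel_right]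
  · have hmem : x + u ∉ Ioc (u - π) (u + π) := by
      simp only [mem_Ioc] at hx ⊢
      intro hc
      exact absurd ⟨by linarith [hc.1], by linarith [hc.2]⟩ hx
    rw [indicator_of_notMem hx, indicator_of_notMem hmem]

lemma base_lt_top {c : ℝ} (hc1 : c < 1) :
    ∫⁻ x in Ioo 0 π, ENNReal.ofReal (|x| ^ (-c)) < ⊤ := by
  have hint : IntegrableOn (fun x : ℝ => x ^ (-c)) (Ioo 0 π) :=
    (intervalIntegral.integrableOn_Ioo_rpow_iff Real.pi_pos).2 (by linarith)
  have hnn : 0 ≤ᵐ[volume.restrict (Ioo 0 π)] fun x : ℝ => x ^ (-c) := by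
    filter_upwards [ae_restrict_mem measurableSet_Ioo] with x hx
    exact Real.rpow_nonneg hx.1.le _
  have h2 := (hasFiniteIntegral_iff_ofReal hnn).1 hint.2
  refine lt_of_le_of_lt (le_of_eq ?_) h2
  refine setLIntegral_congr_fun measurableSet_Ioo (fun x hx => ?_)
  rw [abs_of_pos hx.1]

lemma lintegral_comp_neg (f : ℝ → ℝ≥0∞) (hf : Measurable f) (s : Set ℝ) :
    ∫⁻ x in s, f x = ∫⁻ x in Neg.neg ⁻¹' s, f (-x) := by
  have h1 : (volume : Measure ℝ).restrict s
      = Measure.map Neg.neg (volume.restrict (Neg.neg ⁻¹' s)) := by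
    conv_lhs => rw [← Measure.map_neg_eq_self (volume : Measure ℝ)]
    exact measurableEmbedding_neg.restrict_map _ _
  rw [h1, lintegral_map hf measurable_neg]

lemma Cg_lt_top {c : ℝ} (hc1 : c < 1) : ∫⁻ x in Ioc (-π) π, G c x < ⊤ := by
  have habs : ∫⁻ x in Ioc (-π) π, G c x
      = ∫⁻ x in Ioc (-π) π, ENNReal.ofReal (|x| ^ (-c)) := by
    refine setLIntegral_congr_fun measurableSet_Ioc (fun x hx => ?_)
    simp only [G]
    rw [infDist_L_abs (abs_le.2 ⟨by linarith [hx.1], hx.2⟩)]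
  rw [habs]
  have hsplit : Ioc (-π) π ⊆ Ioc (-π) 0 ∪ Ioc 0 π := by
    intro x hx
    rcases le_or_gt x 0 with h | h
    · exact Or.inl ⟨hx.1, h⟩
    · exact Or.inr ⟨h, hx.2⟩
  refine lt_of_le_of_lt (lintegral_mono' (Measure.restrict_mono hsplit le_rfl) le_rfl) ?_
  refine lt_of_le_of_lt (lintegral_union_le _ _ _) ?_
  have hpos : ∫⁻ x in Ioc 0 π, ENNReal.ofReal (|x| ^ (-c)) < ⊤ := by
    rw [← setLIntegral_congr Ioo_ae_eq_Ioc]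
    exact base_lt_top hc1
  have hneg : ∫⁻ x in Ioc (-π) 0, ENNReal.ofReal (|x| ^ (-c)) < ⊤ := by
    rw [lintegral_comp_neg _ (by fun_prop) _]
    have hpre : Neg.neg ⁻¹' Ioc (-π) (0 : ℝ) = Ico 0 π := by
      ext x
      simp only [mem_preimage, mem_Ioc, mem_Ico]
      constructor <;> intro h <;> exact ⟨by linarith [h.1, h.2], by linarith [h.1, h.2]⟩
    rw [hpre]
    simp only [abs_neg]
    rw [← setLIntegral_congr Ioo_ae_eq_Ico]
    exact base_lt_top hc1
  exact ENNReal.add_lt_top.2 ⟨hneg, hpos⟩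

lemma tsum_lt_top {β δ' : ℝ} (hβ : 1 < β) (hδ : 0 < δ') (hδ1 : δ' ≤ 1) :
    ∑' k : ℕ, ENNReal.ofReal ((δ' + 2 * π * k) ^ (-β)) < ⊤ := by
  have hπ := Real.pi_gt_three
  have hpos : ∀ k : ℕ, (0 : ℝ) < δ' + 2 * π * k := fun k => by positivity
  have hsum : Summable fun k : ℕ => (δ' + 2 * π * (k : ℝ)) ^ (-β) := by
    have hs2 : Summable fun k : ℕ => ((k : ℝ) + 1) ^ (-β) := by
      have h0 : Summable fun n : ℕ => (n : ℝ) ^ (-β) :=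
        Real.summable_nat_rpow.2 (by linarith)
      refine ((summable_nat_add_iff 1).2 h0).congr fun n => ?_
      push_cast
      ring_nf
    refine Summable.of_nonneg_of_le (fun k => Real.rpow_nonneg (hpos k).le _) (fun k => ?_)
      (hs2.mul_left (δ' ^ (-β)))
    have h1 : 0 < δ' * ((k : ℝ) + 1) := by positivity
    have h2 : δ' * ((k : ℝ) + 1) ≤ δ' + 2 * π * k := by
      have hk0 : (0 : ℝ) ≤ (k : ℝ) := Nat.cast_nonneg k
      nlinarith
    calc (δ' + 2 * π * (k : ℝ)) ^ (-β) ≤ (δ' * ((k : ℝ) + 1)) ^ (-β) :=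
          Real.rpow_le_rpow_of_nonpos h1 h2 (by linarith)
      _ = δ' ^ (-β) * ((k : ℝ) + 1) ^ (-β) := Real.mul_rpow hδ.le (by positivity)
  rw [← ENNReal.ofReal_tsum_of_nonneg (fun k => Real.rpow_nonneg (hpos k).le _) hsum]
  exact ENNReal.ofReal_lt_top

lemma abs_set_eq {δ' : ℝ} : {x : ℝ | δ' < |x|} = Iio (-δ') ∪ Ioi δ' := by
  ext x
  simp only [mem_setOf_eq, mem_union, mem_Iio, mem_Ioi, lt_abs]
  constructor
  · rintro (h | h)
    exacts [Or.inr h, Or.inl (by linarith)]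
  · rintro (h | h)
    exacts [Or.inr (by linarith), Or.inl h]

lemma W_lt_top {β δ' : ℝ} (hβ : 1 < β) (hδ : 0 < δ') :
    ∫⁻ x in Iio (-δ') ∪ Ioi δ', ENNReal.ofReal (|x| ^ (-β)) < ⊤ := by
  have hpos : ∫⁻ x in Ioi δ', ENNReal.ofReal (|x| ^ (-β)) < ⊤ := by
    have hint : IntegrableOn (fun x : ℝ => x ^ (-β)) (Ioi δ') :=
      (integrableOn_Ioi_rpow_iff hδ).2 (by linarith)
    have hnn : 0 ≤ᵐ[volume.restrict (Ioi δ')] fun x : ℝ => x ^ (-β) := by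
      filter_upwards [ae_restrict_mem measurableSet_Ioi] with x hx
      exact Real.rpow_nonneg (hδ.trans hx).le _
    have h2 := (hasFiniteIntegral_iff_ofReal hnn).1 hint.2
    refine lt_of_le_of_lt (le_of_eq ?_) h2
    refine setLIntegral_congr_fun measurableSet_Ioi (fun x hx => ?_)
    rw [abs_of_pos (hδ.trans hx)]
  have hneg : ∫⁻ x in Iio (-δ'), ENNReal.ofReal (|x| ^ (-β)) < ⊤ := by
    rw [lintegral_comp_neg _ (by fun_prop) _]
    have hpre : Neg.neg ⁻¹' Iio (-δ') = Ioi δ' := by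
      ext x
      simp only [mem_preimage, mem_Iio, mem_Ioi]
      constructor <;> intro h <;> linarith
    rw [hpre]
    simpa only [abs_neg] using hpos
  exact lt_of_le_of_lt (lintegral_union_le _ _ _) (ENNReal.add_lt_top.2 ⟨hneg, hpos⟩)

lemma cover_pos {δ' : ℝ} (hδ : 0 < δ') :
    Ioi δ' ⊆ ⋃ k : ℕ, Ioc (δ' + 2 * π * k) (δ' + 2 * π * k + 2 * π) := by
  intro x hx
  rw [mem_Ioi] at hx
  have h2π : (0 : ℝ) < 2 * π := Real.two_pi_pos
  set r := (x - δ') / (2 * π) with hrdef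
  have hrpos : 0 < r := div_pos (by linarith) h2π
  have hc1 : 0 < ⌈r⌉ := Int.ceil_pos.2 hrpos
  set n := ⌈r⌉ with hndef
  have hk : (((n - 1).toNat : ℕ) : ℝ) = (n : ℝ) - 1 := by
    have h := Int.toNat_of_nonneg (show (0 : ℤ) ≤ n - 1 by omega)
    exact_mod_cast congrArg (Int.cast : ℤ → ℝ) h
  refine mem_iUnion.2 ⟨(n - 1).toNat, ?_⟩
  have hub : r ≤ (n : ℝ) := Int.le_ceil r
  have hlb : (n : ℝ) - 1 < r := by
    have := Int.ceil_lt_add_one r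
    rw [← hndef] at this
    linarith
  have hub' : x - δ' ≤ 2 * π * (n : ℝ) := by
    rw [hrdef] at hub
    have := (div_le_iff₀ h2π).1 hub
    linarith
  have hlb' : 2 * π * ((n : ℝ) - 1) < x - δ' := by
    rw [hrdef] at hlb
    have := (lt_div_iff₀ h2π).1 hlb
    linarith
  rw [mem_Ioc, hk]
  constructor <;> nlinarith

lemma cover_neg {δ' : ℝ} (hδ : 0 < δ') :
    Iio (-δ') ⊆ ⋃ k : ℕ, Ioc (-(δ' + 2 * π * k) - 2 * π) (-(δ' + 2 * π * k) - 2 * π + 2 * π) := by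
  intro x hx
  rw [mem_Iio] at hx
  have h2π : (0 : ℝ) < 2 * π := Real.two_pi_pos
  set r := (-x - δ') / (2 * π) with hrdef
  have hrpos : 0 < r := div_pos (by linarith) h2π
  set n := ⌊r⌋ with hndef
  have hn0 : 0 ≤ n := Int.floor_nonneg.2 hrpos.le
  have hk : ((n.toNat : ℕ) : ℝ) = (n : ℝ) := by
    exact_mod_cast congrArg (Int.cast : ℤ → ℝ) (Int.toNat_of_nonneg hn0)
  refine mem_iUnion.2 ⟨n.toNat, ?_⟩
  have hlb : (n : ℝ) ≤ r := Int.floor_le r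
  have hub : r < (n : ℝ) + 1 := Int.lt_floor_add_one r
  have hlb' : 2 * π * (n : ℝ) ≤ -x - δ' := by
    rw [hrdef] at hlb
    have := (le_div_iff₀ h2π).1 hlb
    linarith
  have hub' : -x - δ' < 2 * π * ((n : ℝ) + 1) := by
    rw [hrdef] at hub
    have := (div_lt_iff₀ h2π).1 hub
    linarith
  rw [mem_Ioc, hk]
  constructor <;> nlinarith

lemma inner_bound {β c δ' : ℝ} (hβ0 : 0 ≤ β) (hδ : 0 < δ') (u : ℝ) :
    ∫⁻ s, ({x : ℝ | δ' < |x|}).indicator (fun x => ENNReal.ofReal (|x| ^ (-β))) s * G c (s - u)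
      ≤ (∑' k : ℕ, ENNReal.ofReal ((δ' + 2 * π * k) ^ (-β))) * (∫⁻ x in Ioc (-π) π, G c x)
        + (∑' k : ℕ, ENNReal.ofReal ((δ' + 2 * π * k) ^ (-β))) * (∫⁻ x in Ioc (-π) π, G c x) := by
  have h2π : (0 : ℝ) < 2 * π := Real.two_pi_pos
  have hA : MeasurableSet {x : ℝ | δ' < |x|} :=
    (isOpen_lt continuous_const continuous_abs).measurableSet
  have hrw : ∀ s : ℝ,
      ({x : ℝ | δ' < |x|}).indicator (fun x => ENNReal.ofReal (|x| ^ (-β))) s * G c (s - u)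
      = ({x : ℝ | δ' < |x|}).indicator
          (fun x => ENNReal.ofReal (|x| ^ (-β)) * G c (x - u)) s := by
    intro s
    by_cases hs : s ∈ {x : ℝ | δ' < |x|}
    · rw [indicator_of_mem hs, indicator_of_mem hs]
    · rw [indicator_of_notMem hs, indicator_of_notMem hs, zero_mul]
  simp_rw [hrw]
  rw [lintegral_indicator hA, abs_set_eq]
  refine le_trans (lintegral_union_le _ _ _) (add_le_add ?_ ?_)
  · -- negative side
    refine le_trans (lintegral_mono' (Measure.restrict_mono (cover_neg hδ) le_rfl) le_rfl) ?_
    refine le_trans (lintegral_iUnion_le _ _) ?_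
    refine le_trans (ENNReal.tsum_le_tsum fun k => ?_) (le_of_eq ENNReal.tsum_mul_right)
    calc ∫⁻ s in Ioc (-(δ' + 2 * π * k) - 2 * π) (-(δ' + 2 * π * k) - 2 * π + 2 * π),
            ENNReal.ofReal (|s| ^ (-β)) * G c (s - u)
        ≤ ∫⁻ s in Ioc (-(δ' + 2 * π * k) - 2 * π) (-(δ' + 2 * π * k) - 2 * π + 2 * π),
            ENNReal.ofReal ((δ' + 2 * π * k) ^ (-β)) * G c (s - u) := by
          refine setLIntegral_mono' measurableSet_Ioc fun s hs => ?_
          refine mul_le_mul_left (ENNReal.ofReal_le_ofReal ?_) _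
          refine Real.rpow_le_rpow_of_nonpos (by positivity) ?_ (by linarith)
          have h1 : δ' + 2 * π * (k : ℝ) ≤ -s := by
            have := hs.2
            linarith
          exact h1.trans (neg_le_abs s)
      _ = ENNReal.ofReal ((δ' + 2 * π * k) ^ (-β))
            * ∫⁻ s in Ioc (-(δ' + 2 * π * k) - 2 * π) (-(δ' + 2 * π * k) - 2 * π + 2 * π),
                G c (s - u) :=
          lintegral_const_mul' _ _ ENNReal.ofReal_ne_top
      _ = ENNReal.ofReal ((δ' + 2 * π * k) ^ (-β)) * ∫⁻ x in Ioc (-π) π, G c x := by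
          rw [lintegral_G_Ioc]
  · -- positive side
    refine le_trans (lintegral_mono' (Measure.restrict_mono (cover_pos hδ) le_rfl) le_rfl) ?_
    refine le_trans (lintegral_iUnion_le _ _) ?_
    refine le_trans (ENNReal.tsum_le_tsum fun k => ?_) (le_of_eq ENNReal.tsum_mul_right)
    calc ∫⁻ s in Ioc (δ' + 2 * π * k) (δ' + 2 * π * k + 2 * π),
            ENNReal.ofReal (|s| ^ (-β)) * G c (s - u)
        ≤ ∫⁻ s in Ioc (δ' + 2 * π * k) (δ' + 2 * π * k + 2 * π),
            ENNReal.ofReal ((δ' + 2 * π * k) ^ (-β)) * G c (s - u) := by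
          refine setLIntegral_mono' measurableSet_Ioc fun s hs => ?_
          refine mul_le_mul_left (ENNReal.ofReal_le_ofReal ?_) _
          refine Real.rpow_le_rpow_of_nonpos (by positivity) ?_ (by linarith)
          exact le_trans hs.1.le (le_abs_self s)
      _ = ENNReal.ofReal ((δ' + 2 * π * k) ^ (-β))
            * ∫⁻ s in Ioc (δ' + 2 * π * k) (δ' + 2 * π * k + 2 * π), G c (s - u) :=
          lintegral_const_mul' _ _ ENNReal.ofReal_ne_top
      _ = ENNReal.ofReal ((δ' + 2 * π * k) ^ (-β)) * ∫⁻ x in Ioc (-π) π, G c x := by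
          rw [lintegral_G_Ioc]

end

end DomAux

/-- Finiteness of the dominating integral on `{|s| > δ, |u| > δ, u < s, s-u ∉ 2πℤ}`:
`∫∫ |s|^{α(γ-1)} |u|^{α(γ-1)} dist(s-u, 2πℤ)^{-aα} ds du < ∞`. -/
theorem dominating_integral_finite (α H : ℝ) (hα : α ∈ Ioo (0 : ℝ) 2)
    (hH : H ∈ Ioo (1 / 2 : ℝ) 1) (hαH : α * (1 - H) < 1 / 2)
    (γ : ℝ) (hγ : γ = 1 - H - 1 / α)
    (a δ : ℝ) (ha : a ∈ Ioo (0 : ℝ) 1) (haα : a * α < 1) (hδ : δ ∈ Ioo (0 : ℝ) 1) :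
    ∫⁻ u : ℝ, ∫⁻ s : ℝ,
      {p : ℝ × ℝ | δ < |p.1| ∧ δ < |p.2| ∧ p.2 < p.1 ∧
          ∀ m : ℤ, p.1 - p.2 ≠ 2 * Real.pi * m}.indicator
        (fun p : ℝ × ℝ => ENNReal.ofReal
          (|p.1| ^ (α * (γ - 1)) * |p.2| ^ (α * (γ - 1)) *
            Metric.infDist (p.1 - p.2) (Set.range fun m : ℤ => 2 * Real.pi * (m : ℝ)) ^
              (-(a * α)))) (s, u) < ⊤ := by
  obtain ⟨hα0, hα2⟩ := hα
  obtain ⟨hH1, hH2⟩ := hH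
  obtain ⟨ha0, ha1⟩ := ha
  obtain ⟨hδ0, hδ1⟩ := hδ
  set β : ℝ := α * H + 1 with hβdef
  have hβ : 1 < β := by nlinarith
  have hexp : α * (γ - 1) = -β := by
    rw [hγ, hβdef]
    field_simp
    ring
  set W : ℝ → ℝ≥0∞ :=
    fun x => ({x : ℝ | δ < |x|}).indicator (fun x => ENNReal.ofReal (|x| ^ (-β))) x with hWdef
  have hWtop : ∀ x, W x ≠ ⊤ := by
    intro x
    by_cases h : x ∈ {x : ℝ | δ < |x|}
    · simp [hWdef, indicator_of_mem h]
    · simp [hWdef, indicator_of_notMem h]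
  have hA : MeasurableSet {x : ℝ | δ < |x|} :=
    (isOpen_lt continuous_const continuous_abs).measurableSet
  set M : Set (ℝ × ℝ) := {p : ℝ × ℝ | δ < |p.1| ∧ δ < |p.2| ∧ p.2 < p.1 ∧
      ∀ m : ℤ, p.1 - p.2 ≠ 2 * Real.pi * m} with hMdef
  have hpt : ∀ u s : ℝ,
      M.indicator
        (fun p : ℝ × ℝ => ENNReal.ofReal
          (|p.1| ^ (α * (γ - 1)) * |p.2| ^ (α * (γ - 1)) *
            Metric.infDist (p.1 - p.2) (Set.range fun m : ℤ => 2 * Real.pi * (m : ℝ)) ^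
              (-(a * α)))) (s, u)
        ≤ W u * (W s * DomAux.G (a * α) (s - u)) := by
    intro u s
    by_cases h : (s, u) ∈ M
    · rw [indicator_of_mem h]
      obtain ⟨h1, h2, -, -⟩ := h
      have hs' : s ∈ {x : ℝ | δ < |x|} := h1
      have hu' : u ∈ {x : ℝ | δ < |x|} := h2
      have hWs : W s = ENNReal.ofReal (|s| ^ (-β)) := indicator_of_mem hs' _
      have hWu : W u = ENNReal.ofReal (|u| ^ (-β)) := indicator_of_mem hu' _
      rw [hWs, hWu, hexp]
      have hG : DomAux.G (a * α) (s - u)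
          = ENNReal.ofReal
              (Metric.infDist (s - u) (Set.range fun m : ℤ => 2 * Real.pi * (m : ℝ)) ^
                (-(a * α))) := rfl
      rw [hG]
      rw [ENNReal.ofReal_mul (by positivity), ENNReal.ofReal_mul (by positivity)]
      exact le_of_eq (by ring)
    · rw [indicator_of_notMem h]
      exact zero_le
  set Cg : ℝ≥0∞ := ∫⁻ x in Ioc (-Real.pi) Real.pi, DomAux.G (a * α) x with hCgdef
  set T : ℝ≥0∞ := ∑' k : ℕ, ENNReal.ofReal ((δ + 2 * Real.pi * k) ^ (-β)) with hTdef
  have hCg : Cg < ⊤ := DomAux.Cg_lt_top haα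
  have hT : T < ⊤ := DomAux.tsum_lt_top hβ hδ0 hδ1.le
  have hC : T * Cg + T * Cg < ⊤ :=
    ENNReal.add_lt_top.2 ⟨ENNReal.mul_lt_top hT hCg, ENNReal.mul_lt_top hT hCg⟩
  calc ∫⁻ u : ℝ, ∫⁻ s : ℝ,
        M.indicator
          (fun p : ℝ × ℝ => ENNReal.ofReal
            (|p.1| ^ (α * (γ - 1)) * |p.2| ^ (α * (γ - 1)) *
              Metric.infDist (p.1 - p.2) (Set.range fun m : ℤ => 2 * Real.pi * (m : ℝ)) ^
                (-(a * α)))) (s, u)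
      ≤ ∫⁻ u : ℝ, ∫⁻ s : ℝ, W u * (W s * DomAux.G (a * α) (s - u)) :=
        lintegral_mono fun u => lintegral_mono fun s => hpt u s
    _ = ∫⁻ u : ℝ, W u * ∫⁻ s : ℝ, W s * DomAux.G (a * α) (s - u) :=
        lintegral_congr fun u => lintegral_const_mul' _ _ (hWtop u)
    _ ≤ ∫⁻ u : ℝ, W u * (T * Cg + T * Cg) :=
        lintegral_mono fun u =>
          mul_le_mul_right (DomAux.inner_bound (by linarith) hδ0 u) _
    _ = (∫⁻ u : ℝ, W u) * (T * Cg + T * Cg) :=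
        lintegral_mul_const' _ _ hC.ne
    _ < ⊤ := by
        refine ENNReal.mul_lt_top ?_ hC
        rw [hWdef]
        rw [lintegral_indicator hA, DomAux.abs_set_eq]
        exact DomAux.W_lt_top hβ hδ0
end
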